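/- arXiv:1410.0503 — 4 statements merged into one kernel-verified Lean document; each statement's English description precedes it below -/
import Mathlib

section
/- Let f:(0,∞)→ℝ be convex with f(1)=0, and define φ_f(a,b) as the f-divergence between Bernoulli(a) and Bernoulli(b). Then for every fixed a∈[0,1], the map b ↦ φ_f(a,b) is non-decreasing on [a,1]. -/
open MeasureTheory Filter Set
open scoped ENNReal NNReal

noncomputable section

/-- `phiF f fInf a b`: the `f`-divergence between Bernoulli(`a`) and Bernoulli(`b`),
with `fInf` representing `f'(∞) = lim_{x→∞} f(x)/x`. -/
def phiF (f : ℝ → ℝ) (fInf : EReal) (a b : ℝ) : EReal :=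
  if b = 0 then ((f (1 - a) : ℝ) : EReal) + (a : EReal) * fInf
  else if b = 1 then ((f a : ℝ) : EReal) + ((1 - a : ℝ) : EReal) * fInf
  else ((b : ℝ) : EReal) * ((f (a / b) : ℝ) : EReal)
    + ((1 - b : ℝ) : EReal) * ((f ((1 - a) / (1 - b)) : ℝ) : EReal)

/-- The `f`-divergence `D_f(P‖Q)`, defined via the Radon–Nikodym derivative of `P`
with respect to `Q`, with `fInf = f'(∞)` weighting the `Q`-singular mass of `P`. -/
def fDiv {X : Type*} [MeasurableSpace X] (f : ℝ → ℝ) (fInf : EReal)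
    (P Q : Measure X) : EReal :=
  ((∫ x, f ((P.rnDeriv Q x).toReal) ∂Q : ℝ) : EReal)
    + fInf * ((((P.singularPart Q) Set.univ).toReal : ℝ) : EReal)

/-- Conversion from `EReal` to `ℝ≥0∞`, clamping negative values to `0`. -/
def erealToENNReal (x : EReal) : ℝ≥0∞ :=
  if x = ⊤ then ⊤ else ENNReal.ofReal x.toReal

/-- The `f`-informativity `I_f(w, P) = inf_Q ∫ D_f(P_θ‖Q) w(dθ)`. -/
def fInformativity {Θ X : Type*} [MeasurableSpace Θ] [MeasurableSpace X]
    (f : ℝ → ℝ) (fInf : EReal) (P : Θ → Measure X) (w : Measure Θ) : EReal :=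
  ⨅ (Q : Measure X) (_ : IsProbabilityMeasure Q),
    ((∫⁻ θ, erealToENNReal (fDiv f fInf (P θ) Q) ∂w : ℝ≥0∞) : EReal)

/-- The Bayes risk `inf_𝔡 ∫ E_θ [L(θ, 𝔡(X))] w(dθ)`, infimum over measurable decision rules. -/
def bayesRisk {Θ X A : Type*} [MeasurableSpace Θ] [MeasurableSpace X] [MeasurableSpace A]
    (P : Θ → Measure X) (w : Measure Θ) (L : Θ → A → ℝ) : ℝ :=
  ⨅ d : {d : X → A // Measurable d}, ∫ θ, ∫ x, L θ (d.1 x) ∂(P θ) ∂w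

/-- `u_f(x) = inf{b ∈ [1/2,1] : φ_f(1/2,b) > x}`, equal to 1 if no such `b` exists. -/
def uF (f : ℝ → ℝ) (fInf : EReal) (x : EReal) : ℝ :=
  sInf ({b : ℝ | b ∈ Set.Icc (1/2 : ℝ) 1 ∧ x < phiF f fInf (1/2) b} ∪ {1})

/-- Squared Hellinger distance `H²(P‖Q) = 2 D_{f_{1/2}}(P‖Q)` with `f_{1/2}(x) = 1 - √x`. -/
def hellingerSq {X : Type*} [MeasurableSpace X] (P Q : Measure X) : ℝ :=
  2 * (fDiv (fun x => 1 - Real.sqrt x) 0 P Q).toReal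

section Aux

variable {f : ℝ → ℝ}

private lemma aux_zero (hf : ConvexOn ℝ (Set.Ioi (0:ℝ)) f)
    (hf0 : Filter.Tendsto f (nhdsWithin 0 (Set.Ioi 0)) (nhds (f 0)))
    {y p q : ℝ} (hy : 0 < y) (hp : 0 ≤ p) (hq : 0 ≤ q) (hpq : p + q = 1) :
    f (q * y) ≤ p * f 0 + q * f y := by
  rcases hq.eq_or_lt with rfl|hqpos
  · have hp1 : p = 1 := by linarith
    simp [hp1]
  rcases (show q ≤ 1 by linarith).eq_or_lt with rfl|hq1
  · have hp0 : p = 0 := by linarith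
    simp [hp0]
  have hqy : 0 < q * y := mul_pos hqpos hy
  have hyne : y ≠ 0 := hy.ne'
  have hco : Filter.Tendsto
      (fun ε => (y - q*y)/(y-ε) * f ε + (1 - (y - q*y)/(y-ε)) * f y)
      (nhdsWithin 0 (Set.Ioi 0)) (nhds (p * f 0 + q * f y)) := by
    have h1 : Filter.Tendsto (fun ε : ℝ => (y - q*y)/(y-ε)) (nhdsWithin 0 (Set.Ioi 0)) (nhds p) := by
      have hc : ContinuousAt (fun ε : ℝ => (y - q*y)/(y-ε)) 0 := by
        apply ContinuousAt.div
        · exact continuousAt_const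
        · exact (continuous_const.sub continuous_id).continuousAt
        · simpa using hyne
      have h0 : (y - q*y)/(y-0) = p := by
        field_simp
        nlinarith [hpq]
      have := hc.tendsto
      rw [h0] at this
      exact this.mono_left nhdsWithin_le_nhds
    have h2 : Filter.Tendsto
        (fun ε => (y - q*y)/(y-ε) * f ε + (1 - (y - q*y)/(y-ε)) * f y)
        (nhdsWithin 0 (Set.Ioi 0)) (nhds (p * f 0 + (1 - p) * f y)) :=
      (h1.mul hf0).add ((tendsto_const_nhds.sub h1).mul tendsto_const_nhds)
    have hq' : 1 - p = q := by linarith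
    rw [hq'] at h2
    exact h2
  have hev : ∀ᶠ ε in nhdsWithin 0 (Set.Ioi 0),
      f (q*y) ≤ (y - q*y)/(y-ε) * f ε + (1 - (y - q*y)/(y-ε)) * f y := by
    filter_upwards [Ioo_mem_nhdsGT_of_mem (⟨le_refl 0, hqy⟩ : (0:ℝ) ∈ Set.Ico 0 (q*y))] with ε hε
    obtain ⟨hε0, hεqy⟩ := hε
    have hyε : 0 < y - ε := by nlinarith
    have hyεne : y - ε ≠ 0 := hyε.ne'
    have hl0 : 0 ≤ (y - q*y)/(y-ε) := div_nonneg (by nlinarith) hyε.le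
    have hl1 : (y - q*y)/(y-ε) ≤ 1 := by rw [div_le_one hyε]; nlinarith
    have hcomb : (y - q*y)/(y-ε) * ε + (1 - (y - q*y)/(y-ε)) * y = q * y := by
      field_simp
      ring
    have h := hf.2 (Set.mem_Ioi.2 hε0) (Set.mem_Ioi.2 hy) hl0
      (show (0:ℝ) ≤ 1 - (y - q*y)/(y-ε) by linarith) (by ring)
    rw [smul_eq_mul, smul_eq_mul, smul_eq_mul, hcomb] at h
    exact h
  exact ge_of_tendsto hco hev

private lemma convexOn_Ici_of (hf : ConvexOn ℝ (Set.Ioi (0:ℝ)) f)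
    (hf0 : Filter.Tendsto f (nhdsWithin 0 (Set.Ioi 0)) (nhds (f 0))) :
    ConvexOn ℝ (Set.Ici (0:ℝ)) f := by
  refine ⟨convex_Ici 0, fun x hx y hy p q hp hq hpq => ?_⟩
  rcases (Set.mem_Ici.1 hx).eq_or_lt with rfl|hx0
  · rcases (Set.mem_Ici.1 hy).eq_or_lt with rfl|hy0
    · simp only [smul_eq_mul, mul_zero, add_zero]
      refine le_of_eq ?_
      calc f 0 = 1 * f 0 := (one_mul _).symm
        _ = (p + q) * f 0 := by rw [hpq]
        _ = p * f 0 + q * f 0 := by ring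
    · simp only [smul_eq_mul, mul_zero, zero_add]
      exact aux_zero hf hf0 hy0 hp hq hpq
  · rcases (Set.mem_Ici.1 hy).eq_or_lt with rfl|hy0
    · simp only [smul_eq_mul, mul_zero, add_zero]
      have := aux_zero hf hf0 hx0 hq hp (by linarith)
      linarith
    · exact hf.2 hx0 hy0 hp hq hpq

private lemma slope_le_fInf (hF : ConvexOn ℝ (Set.Ici (0:ℝ)) f) (hf1 : f 1 = 0)
    {fInf : EReal}
    (hfInf : Filter.Tendsto (fun x : ℝ => ((f x / x : ℝ) : EReal)) Filter.atTop (nhds fInf)) :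
    ∀ x : ℝ, 1 < x → ((f x / (x - 1) : ℝ) : EReal) ≤ fInf := by
  have hmono : ∀ x y : ℝ, 1 < x → x ≤ y → f x / (x - 1) ≤ f y / (y - 1) := by
    intro x y hx hxy
    have h := hF.secant_mono (a := 1) (x := x) (y := y)
      (Set.mem_Ici.2 zero_le_one) (Set.mem_Ici.2 (by linarith)) (Set.mem_Ici.2 (by linarith))
      (by linarith : x ≠ 1) (by linarith : y ≠ 1) hxy
    rw [hf1] at h
    simpa using h
  intro x hx
  by_cases htop : fInf = ⊤
  · rw [htop]; exact le_top
  by_cases hbot : fInf = ⊥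
  · exfalso
    rw [hbot] at hfInf
    have hlow : ∀ᶠ y in Filter.atTop, ((min (f 2) 0 : ℝ) : EReal) ≤ ((f y / y : ℝ) : EReal) := by
      filter_upwards [Filter.eventually_ge_atTop (2:ℝ)] with y hy
      have h2 : f 2 ≤ f y / (y - 1) := by
        have := hmono 2 y one_lt_two hy
        norm_num at this
        exact this
      have hy1 : (0:ℝ) < y - 1 := by linarith
      have hy0 : (0:ℝ) < y := by linarith
      have hfy : f 2 * (y - 1) ≤ f y := by
        rw [← le_div_iff₀ hy1]
        exact h2
      refine EReal.coe_le_coe_iff.2 ?_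
      rw [le_div_iff₀ hy0]
      rcases le_or_gt (f 2) 0 with h|h
      · rw [min_eq_left h]; nlinarith
      · rw [min_eq_right h.le]; nlinarith
    have hev := hfInf.eventually_lt_const (EReal.bot_lt_coe (min (f 2) 0))
    obtain ⟨y, hy1, hy2⟩ := (hlow.and hev).exists
    exact absurd (lt_of_le_of_lt hy1 hy2) (lt_irrefl _)
  obtain ⟨r, hr⟩ : ∃ r : ℝ, fInf = (r : EReal) :=
    ⟨fInf.toReal, (EReal.coe_toReal htop hbot).symm⟩
  subst hr
  have hrt : Filter.Tendsto (fun y => f y / y) Filter.atTop (nhds r) := EReal.tendsto_coe.1 hfInf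
  have h1 : Filter.Tendsto (fun y : ℝ => y / (y - 1)) Filter.atTop (nhds 1) := by
    have hbase : Filter.Tendsto (fun y : ℝ => 1 + (y - 1)⁻¹) Filter.atTop (nhds (1 + 0)) :=
      tendsto_const_nhds.add
        (tendsto_inv_atTop_zero.comp (Filter.tendsto_atTop_add_const_right _ (-1) Filter.tendsto_id))
    rw [add_zero] at hbase
    refine Filter.Tendsto.congr' ?_ hbase
    filter_upwards [Filter.eventually_gt_atTop (1:ℝ)] with y hy
    have : y - 1 ≠ 0 := by linarith
    field_simp
    ring
  have h2 : Filter.Tendsto (fun y => f y / (y - 1)) Filter.atTop (nhds r) := by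
    have hmul := hrt.mul h1
    rw [mul_one] at hmul
    refine Filter.Tendsto.congr' ?_ hmul
    filter_upwards [Filter.eventually_gt_atTop (1:ℝ)] with y hy
    have hy0 : y ≠ 0 := by linarith
    have hy1 : y - 1 ≠ 0 := by linarith
    field_simp
  refine EReal.coe_le_coe_iff.2 ?_
  refine ge_of_tendsto h2 ?_
  filter_upwards [Filter.eventually_ge_atTop x] with y hy
  exact hmono x y hx hy

private lemma hrA_lem (hF : ConvexOn ℝ (Set.Ici (0:ℝ)) f) (hf1 : f 1 = 0)
    {a r : ℝ} (ha0 : 0 ≤ a) (ha1 : a < 1)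
    (hr2 : ∀ x : ℝ, 1 < x → f x / (x - 1) ≤ r) : -(f a) / (1 - a) ≤ r := by
  have h := hF.slope_mono_adjacent (Set.mem_Ici.2 ha0)
    (Set.mem_Ici.2 (by norm_num : (0:ℝ) ≤ 2)) ha1 one_lt_two
  have h2 := hr2 2 one_lt_two
  rw [hf1] at h
  norm_num at h h2
  linarith [h, h2]

private lemma persp (hF : ConvexOn ℝ (Set.Ici (0:ℝ)) f) (hf1 : f 1 = 0)
    {c t b₁ b₂ : ℝ} (hc : 0 ≤ c) (ht0 : 0 ≤ t) (ht1 : t ≤ 1)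
    (hb₁ : 0 < b₁) (hb₂ : 0 < b₂) (hsum : t * c + (1 - t) * b₂ = b₁) :
    b₁ * f (c / b₁) ≤ (1 - t) * b₂ * f (c / b₂) := by
  have hb₁' : b₁ ≠ 0 := hb₁.ne'
  have hb₂' : b₂ ≠ 0 := hb₂.ne'
  have hw1 : 0 ≤ t * c / b₁ := by positivity
  have hw2 : 0 ≤ (1 - t) * b₂ / b₁ := div_nonneg (mul_nonneg (by linarith) hb₂.le) hb₁.le
  have hws : t * c / b₁ + (1 - t) * b₂ / b₁ = 1 := by
    field_simp
    linarith [hsum]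

  have hcomb : (t * c / b₁) * 1 + ((1 - t) * b₂ / b₁) * (c / b₂) = c / b₁ := by
    field_simp
    try ring
  have h := hF.2 (Set.mem_Ici.2 zero_le_one : (1:ℝ) ∈ Set.Ici (0:ℝ))
    (Set.mem_Ici.2 (div_nonneg hc hb₂.le) : c / b₂ ∈ Set.Ici (0:ℝ)) hw1 hw2 hws
  simp only [smul_eq_mul] at h
  rw [hcomb, hf1, mul_zero, zero_add] at h
  calc b₁ * f (c / b₁) ≤ b₁ * ((1 - t) * b₂ / b₁ * f (c / b₂)) :=
        mul_le_mul_of_nonneg_left h hb₁.le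
    _ = (1 - t) * b₂ * f (c / b₂) := by field_simp

private lemma jensen (hF : ConvexOn ℝ (Set.Ici (0:ℝ)) f) (hf1 : f 1 = 0)
    {a b : ℝ} (ha0 : 0 ≤ a) (ha1 : a ≤ 1) (hb : 0 < b) (hb1 : b < 1) :
    0 ≤ b * f (a / b) + (1 - b) * f ((1 - a) / (1 - b)) := by
  have hb' : b ≠ 0 := hb.ne'
  have hb1' : (1:ℝ) - b ≠ 0 := by linarith
  have h := hF.2 (Set.mem_Ici.2 (div_nonneg ha0 hb.le) : a / b ∈ Set.Ici (0:ℝ))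
    (Set.mem_Ici.2 (div_nonneg (by linarith) (by linarith)) :
      (1 - a) / (1 - b) ∈ Set.Ici (0:ℝ)) hb.le
    (show (0:ℝ) ≤ 1 - b by linarith) (by ring)
  simp only [smul_eq_mul] at h
  have hcomb : b * (a / b) + (1 - b) * ((1 - a) / (1 - b)) = 1 := by
    field_simp
    ring
  rw [hcomb, hf1] at h
  linarith

private lemma phi_interior_mono (hF : ConvexOn ℝ (Set.Ici (0:ℝ)) f) (hf1 : f 1 = 0)
    {a b₁ b₂ : ℝ} (ha0 : 0 ≤ a) (hab : a ≤ b₁)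
    (hb₁ : 0 < b₁) (h12 : b₁ ≤ b₂) (hb₂ : b₂ < 1) :
    b₁ * f (a / b₁) + (1 - b₁) * f ((1 - a) / (1 - b₁)) ≤
      b₂ * f (a / b₂) + (1 - b₂) * f ((1 - a) / (1 - b₂)) := by
  rcases h12.eq_or_lt with rfl|h12
  · exact le_refl _
  have hb₂a : 0 < b₂ - a := by linarith
  have hb₂a' : b₂ - a ≠ 0 := hb₂a.ne'
  have ht0 : 0 ≤ (b₂ - b₁) / (b₂ - a) := div_nonneg (by linarith) hb₂a.le
  have ht1 : (b₂ - b₁) / (b₂ - a) ≤ 1 := by rw [div_le_one hb₂a]; linarith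
  have hsum1 : (b₂ - b₁) / (b₂ - a) * a + (1 - (b₂ - b₁) / (b₂ - a)) * b₂ = b₁ := by
    field_simp
    ring
  have hsum2 : (b₂ - b₁) / (b₂ - a) * (1 - a)
      + (1 - (b₂ - b₁) / (b₂ - a)) * (1 - b₂) = 1 - b₁ := by
    field_simp
    ring
  have h1 := persp hF hf1 ha0 ht0 ht1 hb₁ (by linarith : (0:ℝ) < b₂) hsum1
  have h2 := persp hF hf1 (c := 1 - a) (b₁ := 1 - b₁) (b₂ := 1 - b₂)
    (by linarith) ht0 ht1 (by linarith) (by linarith) hsum2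
  have hj := jensen hF hf1 ha0 (by linarith : a ≤ 1) (by linarith : (0:ℝ) < b₂) hb₂
  nlinarith [mul_nonneg ht0 hj, h1, h2]

private lemma bdry (hF : ConvexOn ℝ (Set.Ici (0:ℝ)) f) (hf1 : f 1 = 0)
    {a b r : ℝ}
    (hr2 : ∀ x : ℝ, 1 < x → f x / (x - 1) ≤ r)
    (hrA : -(f a) / (1 - a) ≤ r)
    (ha0 : 0 ≤ a) (hab : a ≤ b) (hb : 0 < b) (hb1 : b < 1) :
    b * f (a / b) + (1 - b) * f ((1 - a) / (1 - b)) ≤ f a + (1 - a) * r := by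
  have ha1 : a < 1 := lt_of_le_of_lt hab hb1
  have hb' : b ≠ 0 := hb.ne'
  have h1a : (0:ℝ) < 1 - a := by linarith
  have h1a' : (1:ℝ) - a ≠ 0 := h1a.ne'
  have h1b : (0:ℝ) < 1 - b := by linarith
  have h6 : -(f a) ≤ (1 - a) * r := by
    have := (div_le_iff₀ h1a).1 hrA
    linarith
  have hpt : b * f (a / b) ≤ (b - a) / (1 - a) * f a := by
    have hab' : a / b ≤ 1 := (div_le_one hb).2 hab
    have haab : a ≤ a / b := by
      rw [le_div_iff₀ hb]
      nlinarith
    have hs0 : 0 ≤ (1 - a / b) / (1 - a) := div_nonneg (by linarith) h1a.le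
    have hs1 : (1 - a / b) / (1 - a) ≤ 1 := by rw [div_le_one h1a]; linarith
    have hcomb : ((1 - a / b) / (1 - a)) * a + (1 - (1 - a / b) / (1 - a)) * 1 = a / b := by
      field_simp
      ring
    have h := hF.2 (Set.mem_Ici.2 ha0 : a ∈ Set.Ici (0:ℝ))
      (Set.mem_Ici.2 zero_le_one : (1:ℝ) ∈ Set.Ici (0:ℝ)) hs0
      (show (0:ℝ) ≤ 1 - (1 - a / b) / (1 - a) by linarith) (by ring)
    simp only [smul_eq_mul] at h
    rw [hcomb, hf1, mul_zero, add_zero] at h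
    have hbs : b * ((1 - a / b) / (1 - a)) = (b - a) / (1 - a) := by
      field_simp
    calc b * f (a / b) ≤ b * ((1 - a / b) / (1 - a) * f a) :=
          mul_le_mul_of_nonneg_left h hb.le
      _ = (b - a) / (1 - a) * f a := by rw [← mul_assoc, hbs]
  rcases hab.eq_or_lt with rfl|hab'
  · rw [div_self hb', div_self (show (1:ℝ) - a ≠ 0 by linarith), hf1]
    -- here b = a was substituted : variables coincide
    nlinarith [h6]
  · have hx1 : 1 < (1 - a) / (1 - b) := by rw [lt_div_iff₀ h1b]; linarith
    have h2 := hr2 _ hx1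
    have hx2 : (1 - b) * ((1 - a) / (1 - b) - 1) = b - a := by
      field_simp
      ring
    have h3 : (1 - b) * f ((1 - a) / (1 - b)) ≤ (b - a) * r := by
      have h4 : f ((1 - a) / (1 - b)) ≤ ((1 - a) / (1 - b) - 1) * r := by
        have := (div_le_iff₀ (by linarith : (0:ℝ) < (1 - a) / (1 - b) - 1)).1 h2
        linarith
      calc (1 - b) * f ((1 - a) / (1 - b))
          ≤ (1 - b) * (((1 - a) / (1 - b) - 1) * r) :=
            mul_le_mul_of_nonneg_left h4 h1b.le
        _ = (b - a) * r := by rw [← mul_assoc, hx2]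
    have h5 : (b - a) / (1 - a) * f a + (b - a) * r ≤ f a + (1 - a) * r := by
      have h7 : (b - a) / (1 - a) * f a - f a = -((1 - b) / (1 - a)) * f a := by
        field_simp
        ring
      have h8 : (1 - b) / (1 - a) * (-(f a)) ≤ (1 - b) / (1 - a) * ((1 - a) * r) :=
        mul_le_mul_of_nonneg_left h6 (div_nonneg h1b.le h1a.le)
      have h9 : (1 - b) / (1 - a) * ((1 - a) * r) = (1 - b) * r := by
        field_simp
      linarith [h7, h8, h9]
    linarith [hpt, h3, h5]

end Aux

/-- For convex `f` on `(0,∞)` with `f 1 = 0` and `f'(∞) = fInf`,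
for every fixed `a ∈ [0,1]` the map `b ↦ φ_f(a,b)` is non-decreasing on `[a,1]`. -/
theorem phiF_monotone_in_second_arg
    (f : ℝ → ℝ) (fInf : EReal)
    (hf : ConvexOn ℝ (Set.Ioi (0:ℝ)) f)
    (hf0 : Filter.Tendsto f (nhdsWithin 0 (Set.Ioi 0)) (nhds (f 0)))
    (hf1 : f 1 = 0)
    (hfInf : Filter.Tendsto (fun x : ℝ => ((f x / x : ℝ) : EReal)) Filter.atTop (nhds fInf))
    (a : ℝ) (ha : a ∈ Set.Icc (0:ℝ) 1) :
    MonotoneOn (fun b => phiF f fInf a b) (Set.Icc a 1) := by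
  have hF : ConvexOn ℝ (Set.Ici (0:ℝ)) f := convexOn_Ici_of hf hf0
  have hA : ∀ x : ℝ, 1 < x → ((f x / (x - 1) : ℝ) : EReal) ≤ fInf := slope_le_fInf hF hf1 hfInf
  have hbot : fInf ≠ ⊥ := by
    intro h
    have := hA 2 one_lt_two
    rw [h, le_bot_iff] at this
    exact EReal.coe_ne_bot _ this
  obtain ⟨ha0, ha1⟩ := ha
  intro b₁ hb₁ b₂ hb₂ h12
  rcases h12.eq_or_lt with rfl|h12
  · exact le_refl _
  obtain ⟨hab₁, hb₁1⟩ := hb₁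
  obtain ⟨hab₂, hb₂1⟩ := hb₂
  have hb₂0 : 0 < b₂ := lt_of_le_of_lt (le_trans ha0 hab₁) h12
  show phiF f fInf a b₁ ≤ phiF f fInf a b₂
  by_cases hb₂e : b₂ = 1
  · subst hb₂e
    by_cases hb₁e : b₁ = 0
    · subst hb₁e
      have haz : a = 0 := le_antisymm hab₁ ha0
      subst haz
      simp only [phiF]
      rw [if_pos (trivial : True), if_neg (one_ne_zero : (1:ℝ) ≠ 0), if_pos (trivial : True)]
      norm_num [hf1]
      -- goal : 0 * fInf ≤ ↑(f 0) + 1 * fInf  (hopefully)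
      by_cases htop : fInf = ⊤
      · rw [htop]
        rw [EReal.add_top_of_ne_bot (EReal.coe_ne_bot _)]
        exact le_top
      · obtain ⟨r, hr⟩ : ∃ r : ℝ, fInf = (r : EReal) :=
          ⟨fInf.toReal, (EReal.coe_toReal htop hbot).symm⟩
        subst hr
        have hr2 : ∀ x : ℝ, 1 < x → f x / (x - 1) ≤ r := fun x hx =>
          EReal.coe_le_coe_iff.1 (hA x hx)
        have hrA := hrA_lem hF hf1 (le_refl (0:ℝ)) one_pos hr2
        norm_num at hrA
        rw [← EReal.coe_add]
        exact EReal.coe_nonneg.2 (by linarith)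
    · have hb₁0 : 0 < b₁ := lt_of_le_of_ne (le_trans ha0 hab₁) (Ne.symm hb₁e)
      have hb₁1' : b₁ < 1 := h12
      have ha1' : a < 1 := lt_of_le_of_lt hab₁ hb₁1'
      simp only [phiF]
      rw [if_neg hb₁e, if_neg (ne_of_lt hb₁1'), if_neg (one_ne_zero : (1:ℝ) ≠ 0),
        if_pos (trivial : True)]
      by_cases htop : fInf = ⊤
      · rw [htop, EReal.coe_mul_top_of_pos (by linarith : (0:ℝ) < 1 - a),
          EReal.add_top_of_ne_bot (EReal.coe_ne_bot _)]
        exact le_top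
      · obtain ⟨r, hr⟩ : ∃ r : ℝ, fInf = (r : EReal) :=
          ⟨fInf.toReal, (EReal.coe_toReal htop hbot).symm⟩
        subst hr
        have hr2 : ∀ x : ℝ, 1 < x → f x / (x - 1) ≤ r := fun x hx =>
          EReal.coe_le_coe_iff.1 (hA x hx)
        have hrA := hrA_lem hF hf1 ha0 ha1' hr2
        rw [← EReal.coe_mul, ← EReal.coe_mul, ← EReal.coe_add, ← EReal.coe_mul, ← EReal.coe_add]
        exact EReal.coe_le_coe_iff.2 (bdry hF hf1 hr2 hrA ha0 hab₁ hb₁0 hb₁1')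
  · have hb₂1' : b₂ < 1 := lt_of_le_of_ne hb₂1 hb₂e
    by_cases hb₁e : b₁ = 0
    · subst hb₁e
      have haz : a = 0 := le_antisymm hab₁ ha0
      subst haz
      simp only [phiF]
      rw [if_pos (trivial : True), if_neg (ne_of_gt hb₂0), if_neg hb₂e]
      have hj := jensen hF hf1 (le_refl (0:ℝ)) zero_le_one hb₂0 hb₂1'
      have h0 : ((f (1 - 0) : ℝ) : EReal) + ((0:ℝ) : EReal) * fInf = (0 : EReal) := by
        norm_num [hf1]
      rw [h0, ← EReal.coe_mul, ← EReal.coe_mul, ← EReal.coe_add]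
      exact EReal.coe_nonneg.2 hj
    · have hb₁0 : 0 < b₁ := lt_of_le_of_ne (le_trans ha0 hab₁) (Ne.symm hb₁e)
      have hb₁1' : b₁ < 1 := lt_of_lt_of_le h12 hb₂1
      simp only [phiF]
      rw [if_neg hb₁e, if_neg (ne_of_lt hb₁1'), if_neg (ne_of_gt hb₂0), if_neg hb₂e]
      rw [← EReal.coe_mul, ← EReal.coe_mul, ← EReal.coe_add,
        ← EReal.coe_mul, ← EReal.coe_mul, ← EReal.coe_add]
      exact EReal.coe_le_coe_iff.2
        (phi_interior_mono hF hf1 ha0 hab₁ hb₁0 h12.le hb₂1')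
end
end

section
/- With zero-one loss L and prior w, the Bayes risk R satisfies R ≥ R_0 - I_TV(w, P), where I_TV(w,P) := inf_Q ∫_Θ ‖P_θ - Q‖_TV w(dθ) is the total-variation informativity and R_0 := 1 - sup_{a∈A} w{θ : L(θ,a)=0}. -/
open MeasureTheory Filter Set
open scoped ENNReal NNReal

noncomputable section

section AuxTV

variable {X : Type*} [MeasurableSpace X]


lemma real_tv (P Q : Measure X) [IsProbabilityMeasure P] [IsProbabilityMeasure Q]
    {S : Set X} (hS : MeasurableSet S) :
    (P S).toReal ≤ (Q S).toReal
      + (∫ x, |(P.rnDeriv Q x).toReal - 1| / 2 ∂Q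
          + ((P.singularPart Q) Set.univ).toReal / 2) := by
  set p : X → ℝ := fun x => (P.rnDeriv Q x).toReal with hp
  have hpint : Integrable p Q := Measure.integrable_toReal_rnDeriv
  have hsub : Integrable (fun x => p x - 1) Q := hpint.sub (integrable_const 1)
  have habs : Integrable (fun x => |p x - 1|) Q := hsub.abs
  have hsingfin : ∀ T : Set X, P.singularPart Q T ≠ ∞ := fun T =>
    ((Measure.singularPart_le P Q T).trans_lt (measure_lt_top P T)).ne
  have decomp : ∀ T : Set X, MeasurableSet T →
      (P T).toReal = (P.singularPart Q T).toReal + ∫ x in T, p x ∂Q := by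
    intro T hT
    have h1 : P T = P.singularPart Q T + ∫⁻ x in T, P.rnDeriv Q x ∂Q := by
      conv_lhs => rw [← P.singularPart_add_rnDeriv Q]
      rw [Measure.add_apply, withDensity_apply _ hT]
    have h2 : ∫ x in T, p x ∂Q = (∫⁻ x in T, P.rnDeriv Q x ∂Q).toReal := by
      apply integral_toReal
      · exact (Measure.measurable_rnDeriv P Q).aemeasurable.restrict
      · exact ae_restrict_of_ae (Measure.rnDeriv_lt_top P Q)
    rw [h1, ENNReal.toReal_add (hsingfin T) ?_, h2]
    exact ((setLIntegral_le_lintegral _ _).trans_lt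
      (Measure.lintegral_rnDeriv_lt_top P Q)).ne
  have hQT : ∀ T : Set X, (Q T).toReal = ∫ x in T, (1:ℝ) ∂Q := by
    intro T
    simp [Measure.restrict_apply_univ, Measure.real]
  have hdiff : ∀ T : Set X, MeasurableSet T →
      (P T).toReal - (Q T).toReal
        = (P.singularPart Q T).toReal + ∫ x in T, (p x - 1) ∂Q := by
    intro T hT
    rw [decomp T hT, hQT T, integral_sub hpint.restrict (integrable_const 1)]
    ring
  have hPsum : (P S).toReal + (P Sᶜ).toReal = 1 := by
    rw [← ENNReal.toReal_add (measure_ne_top _ _) (measure_ne_top _ _),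
      measure_add_measure_compl hS]
    simp
  have hQsum : (Q S).toReal + (Q Sᶜ).toReal = 1 := by
    rw [← ENNReal.toReal_add (measure_ne_top _ _) (measure_ne_top _ _),
      measure_add_measure_compl hS]
    simp
  have hsing : (P.singularPart Q S).toReal + (P.singularPart Q Sᶜ).toReal
      = ((P.singularPart Q) Set.univ).toReal := by
    rw [← ENNReal.toReal_add (hsingfin S) (hsingfin Sᶜ), measure_add_measure_compl hS]
  have habs_split : ∫ x in S, |p x - 1| ∂Q + ∫ x in Sᶜ, |p x - 1| ∂Q
      = ∫ x, |p x - 1| ∂Q := integral_add_compl hS habs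
  have h1 : ∫ x in S, (p x - 1) ∂Q ≤ ∫ x in S, |p x - 1| ∂Q :=
    integral_mono hsub.restrict habs.restrict fun x => le_abs_self _
  have h2 : -(∫ x in Sᶜ, (p x - 1) ∂Q) ≤ ∫ x in Sᶜ, |p x - 1| ∂Q := by
    rw [← integral_neg]
    exact integral_mono hsub.restrict.neg habs.restrict fun x => neg_le_abs _
  have hhalf : ∫ x, |p x - 1| / 2 ∂Q = (∫ x, |p x - 1| ∂Q) / 2 := integral_div 2 _
  have hd1 := hdiff S hS
  have hd2 := hdiff Sᶜ hS.compl
  have hs2 : 0 ≤ (P.singularPart Q Sᶜ).toReal := ENNReal.toReal_nonneg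
  linarith

lemma key_tv (P Q : Measure X) [IsProbabilityMeasure P] [IsProbabilityMeasure Q]
    {S : Set X} (hS : MeasurableSet S) :
    P S ≤ Q S + erealToENNReal (fDiv (fun x => |x - 1| / 2) (((1:ℝ)/2 : ℝ) : EReal) P Q) := by
  set I : ℝ := ∫ x, |(P.rnDeriv Q x).toReal - 1| / 2 ∂Q with hI
  set s : ℝ := ((P.singularPart Q) Set.univ).toReal with hs
  have hIpos : 0 ≤ I := integral_nonneg fun x => by positivity
  have hspos : 0 ≤ s := ENNReal.toReal_nonneg
  have hfd : fDiv (fun x => |x - 1| / 2) (((1:ℝ)/2 : ℝ) : EReal) P Q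
      = ((I + s / 2 : ℝ) : EReal) := by
    rw [fDiv, ← EReal.coe_mul, ← EReal.coe_add]
    exact EReal.coe_eq_coe_iff.mpr (by rw [hI, hs]; ring)
  rw [hfd]
  have he : erealToENNReal ((I + s / 2 : ℝ) : EReal) = ENNReal.ofReal (I + s / 2) := by
    rw [erealToENNReal, if_neg (EReal.coe_ne_top _), EReal.toReal_coe]
  rw [he]
  have hreal := real_tv P Q hS
  calc P S = ENNReal.ofReal (P S).toReal := (ENNReal.ofReal_toReal (measure_ne_top _ _)).symm
    _ ≤ ENNReal.ofReal ((Q S).toReal + (I + s / 2)) := ENNReal.ofReal_le_ofReal hreal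
    _ = ENNReal.ofReal (Q S).toReal + ENNReal.ofReal (I + s / 2) :=
        ENNReal.ofReal_add ENNReal.toReal_nonneg (by positivity)
    _ = Q S + ENNReal.ofReal (I + s / 2) := by
        rw [ENNReal.ofReal_toReal (measure_ne_top _ _)]

end AuxTV

/-- For zero-one loss, `R ≥ R_0 - I_TV(w,P)`, where the total-variation
informativity is the `f`-informativity for `f(x) = |x-1|/2` (with `f'(∞) = 1/2`), and
`IUp` is any real upper bound on it. -/
theorem bayes_risk_tv_lower_bound
    {Θ X A : Type*} [MeasurableSpace Θ] [MeasurableSpace X] [MeasurableSpace A] [Nonempty A]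
    (w : Measure Θ) [IsProbabilityMeasure w]
    (P : Θ → Measure X) (hP : ∀ θ, IsProbabilityMeasure (P θ)) (hPm : Measurable P)
    (L : Θ → A → ℝ) (hL01 : ∀ θ a, L θ a = 0 ∨ L θ a = 1)
    (hLm : Measurable (Function.uncurry L))
    (IUp : ℝ)
    (hI : fInformativity (fun x => |x - 1| / 2) (((1:ℝ)/2 : ℝ) : EReal) P w
        ≤ ((IUp : ℝ) : EReal)) :
    (1 - ⨆ a : A, (w {θ | L θ a = 0}).toReal) - IUp ≤ bayesRisk P w L := by
  haveI := fun θ => hP θ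
  set sup : ℝ := ⨆ a : A, (w {θ | L θ a = 0}).toReal with hsupdef
  have hle1 : ∀ s : Set Θ, (w s).toReal ≤ 1 := by
    intro s
    have := ENNReal.toReal_mono (measure_ne_top w univ) (measure_mono (subset_univ s))
    simpa using this
  have hbdd : BddAbove (Set.range fun a : A => (w {θ | L θ a = 0}).toReal) := by
    refine ⟨1, ?_⟩
    rintro _ ⟨a, rfl⟩
    exact hle1 _
  have hsup0 : 0 ≤ sup := Real.iSup_nonneg fun a => ENNReal.toReal_nonneg
  have : Nonempty {d : X → A // Measurable d} :=
    ⟨⟨fun _ => Classical.arbitrary A, measurable_const⟩⟩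
  rw [bayesRisk]
  refine le_ciInf fun d0 => ?_
  obtain ⟨d, hd⟩ := d0
  simp only
  set risk : ℝ := ∫ θ, ∫ x, L θ (d x) ∂(P θ) ∂w with hriskdef
  -- measurable sets in the product
  have hgm : Measurable (fun q : Θ × X => L q.1 (d q.2)) :=
    hLm.comp (measurable_fst.prodMk (hd.comp measurable_snd))
  set B : Set (Θ × X) := {q : Θ × X | L q.1 (d q.2) = 1} with hBdef
  set S' : Set (Θ × X) := {q : Θ × X | L q.1 (d q.2) = 0} with hSdef
  have hBm : MeasurableSet B := hgm (measurableSet_singleton 1)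
  have hSm : MeasurableSet S' := hgm (measurableSet_singleton 0)
  have hScompl : ∀ θ : Θ, (Prod.mk θ ⁻¹' S') = (Prod.mk θ ⁻¹' B)ᶜ := by
    intro θ
    ext x
    simp only [mem_preimage, mem_compl_iff, hSdef, hBdef, mem_setOf_eq]
    constructor
    · intro h h1
      rw [h1] at h; norm_num at h
    · intro h
      rcases hL01 θ (d x) with h0 | h1
      · exact h0
      · exact absurd h1 h
  have hSθm : ∀ θ : Θ, MeasurableSet (Prod.mk θ ⁻¹' S') :=
    fun θ => measurable_prodMk_left hSm
  have hBθm : ∀ θ : Θ, MeasurableSet (Prod.mk θ ⁻¹' B) :=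
    fun θ => measurable_prodMk_left hBm
  set κ : ProbabilityTheory.Kernel Θ X := ⟨P, hPm⟩ with hκdef
  haveI : ProbabilityTheory.IsMarkovKernel κ := ⟨fun θ => hP θ⟩
  have hmeasPB : Measurable fun θ => P θ (Prod.mk θ ⁻¹' B) :=
    ProbabilityTheory.Kernel.measurable_kernel_prodMk_left (κ := κ) hBm
  have hmeasPS : Measurable fun θ => P θ (Prod.mk θ ⁻¹' S') :=
    ProbabilityTheory.Kernel.measurable_kernel_prodMk_left (κ := κ) hSm
  -- inner integral
  have hinner : ∀ θ : Θ, ∫ x, L θ (d x) ∂(P θ) = (P θ (Prod.mk θ ⁻¹' B)).toReal := by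
    intro θ
    have hfe : (fun x => L θ (d x))
        = (Prod.mk θ ⁻¹' B).indicator (fun _ => (1:ℝ)) := by
      funext x
      rcases hL01 θ (d x) with h0 | h1
      · have hx : x ∉ Prod.mk θ ⁻¹' B := by
          simp [hBdef, mem_preimage, mem_setOf_eq, h0]
        rw [h0, Set.indicator_of_notMem hx]
      · have hx : x ∈ Prod.mk θ ⁻¹' B := by
          simp [hBdef, mem_preimage, mem_setOf_eq, h1]
        rw [h1, Set.indicator_of_mem hx]
    rw [hfe, integral_indicator_const _ (hBθm θ)]
    simp [Measure.real]
  set Rlin : ℝ≥0∞ := ∫⁻ θ, P θ (Prod.mk θ ⁻¹' B) ∂w with hRlindef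
  have hRlin_ne : Rlin ≠ ⊤ := by
    refine ne_of_lt (lt_of_le_of_lt ?_ (by norm_num : (1:ℝ≥0∞) < ⊤))
    calc Rlin ≤ ∫⁻ _, 1 ∂w := lintegral_mono fun θ => prob_le_one
      _ = 1 := by simp
  have hrisk_eq : risk = Rlin.toReal := by
    rw [hriskdef]
    have : ∫ θ, ∫ x, L θ (d x) ∂(P θ) ∂w
        = ∫ θ, (P θ (Prod.mk θ ⁻¹' B)).toReal ∂w := by
      exact integral_congr_ae (ae_of_all _ hinner)
    rw [this, integral_toReal hmeasPB.aemeasurable (ae_of_all _ fun θ => measure_lt_top _ _)]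
  -- main EReal step
  have hkey : ((1 - sup - risk : ℝ) : EReal) ≤ ((IUp : ℝ) : EReal) := by
    refine le_trans ?_ hI
    rw [fInformativity]
    refine le_iInf fun Q => le_iInf fun hQ => ?_
    haveI := hQ
    set V : ℝ≥0∞ := ∫⁻ θ, erealToENNReal
      (fDiv (fun x => |x - 1| / 2) (((1:ℝ)/2 : ℝ) : EReal) (P θ) Q) ∂w with hVdef
    by_cases hV : V = ⊤
    · rw [hV, EReal.coe_ennreal_top]
      exact le_top
    -- Tonelli bound for the Q-part
    have hmeasQS : Measurable fun θ => Q (Prod.mk θ ⁻¹' S') := by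
      have := ProbabilityTheory.Kernel.measurable_kernel_prodMk_left
        (κ := ProbabilityTheory.Kernel.const Θ Q) hSm
      simpa using this
    have hQpart : ∫⁻ θ, Q (Prod.mk θ ⁻¹' S') ∂w ≤ ENNReal.ofReal sup := by
      have hind : ∀ θ, Q (Prod.mk θ ⁻¹' S')
          = ∫⁻ x, S'.indicator (fun _ => (1:ℝ≥0∞)) (θ, x) ∂Q := by
        intro θ
        rw [← lintegral_indicator_one (hSθm θ)]
        refine lintegral_congr fun x => ?_
        by_cases hx : (θ, x) ∈ S'
        · rw [Set.indicator_of_mem hx, Set.indicator_of_mem (by exact hx)]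
          rfl
        · rw [Set.indicator_of_notMem hx, Set.indicator_of_notMem (by exact hx)]
      calc ∫⁻ θ, Q (Prod.mk θ ⁻¹' S') ∂w
          = ∫⁻ θ, ∫⁻ x, S'.indicator (fun _ => (1:ℝ≥0∞)) (θ, x) ∂Q ∂w := by
            exact lintegral_congr hind
        _ = ∫⁻ x, ∫⁻ θ, S'.indicator (fun _ => (1:ℝ≥0∞)) (θ, x) ∂w ∂Q := by
            apply lintegral_lintegral_swap
            exact ((measurable_const.indicator hSm).aemeasurable)
        _ ≤ ∫⁻ _, ENNReal.ofReal sup ∂Q := by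
            refine lintegral_mono fun x => ?_
            have hms : MeasurableSet {θ : Θ | L θ (d x) = 0} :=
              (hLm.comp (measurable_id.prodMk measurable_const))
                (measurableSet_singleton 0)
            have hw : ∫⁻ θ, S'.indicator (fun _ => (1:ℝ≥0∞)) (θ, x) ∂w
                = w {θ | L θ (d x) = 0} := by
              rw [← lintegral_indicator_one hms]
              refine lintegral_congr fun θ => ?_
              by_cases hθ : (θ, x) ∈ S'
              · rw [Set.indicator_of_mem hθ, Set.indicator_of_mem (by exact hθ)]
                rfl
              · rw [Set.indicator_of_notMem hθ, Set.indicator_of_notMem (by exact hθ)]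
            rw [hw, ← ENNReal.ofReal_toReal (measure_ne_top w _)]
            exact ENNReal.ofReal_le_ofReal (le_ciSup hbdd (d x))
        _ = ENNReal.ofReal sup := by simp
    -- combine everything
    have hptwise : ∀ θ, P θ (Prod.mk θ ⁻¹' S') ≤ Q (Prod.mk θ ⁻¹' S')
        + erealToENNReal (fDiv (fun x => |x - 1| / 2) (((1:ℝ)/2 : ℝ) : EReal) (P θ) Q) :=
      fun θ => key_tv (P θ) Q (hSθm θ)
    have hone : (1:ℝ≥0∞) = ∫⁻ θ, P θ (Prod.mk θ ⁻¹' S') ∂w + Rlin := by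
      have hpt : ∀ θ, P θ (Prod.mk θ ⁻¹' S') + P θ (Prod.mk θ ⁻¹' B) = 1 := by
        intro θ
        rw [hScompl θ, add_comm, measure_add_measure_compl (hBθm θ)]
        simp
      calc (1:ℝ≥0∞) = ∫⁻ _, (1:ℝ≥0∞) ∂w := by simp
        _ = ∫⁻ θ, (P θ (Prod.mk θ ⁻¹' S') + P θ (Prod.mk θ ⁻¹' B)) ∂w :=
            (lintegral_congr fun θ => (hpt θ).symm)
        _ = ∫⁻ θ, P θ (Prod.mk θ ⁻¹' S') ∂w + Rlin := lintegral_add_left hmeasPS _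
    have hPSle : ∫⁻ θ, P θ (Prod.mk θ ⁻¹' S') ∂w ≤ ENNReal.ofReal sup + V := by
      calc ∫⁻ θ, P θ (Prod.mk θ ⁻¹' S') ∂w
          ≤ ∫⁻ θ, (Q (Prod.mk θ ⁻¹' S')
            + erealToENNReal (fDiv (fun x => |x - 1| / 2) (((1:ℝ)/2 : ℝ) : EReal) (P θ) Q)) ∂w :=
            lintegral_mono hptwise
        _ = ∫⁻ θ, Q (Prod.mk θ ⁻¹' S') ∂w + V := lintegral_add_left hmeasQS _
        _ ≤ ENNReal.ofReal sup + V := add_le_add_left hQpart _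
    have hmain : (1:ℝ≥0∞) ≤ ENNReal.ofReal sup + V + Rlin := by
      rw [hone]
      exact add_le_add_left hPSle _
    have hfin1 : ENNReal.ofReal sup + V ≠ ⊤ := ENNReal.add_ne_top.mpr ⟨ENNReal.ofReal_ne_top, hV⟩
    have hfin : ENNReal.ofReal sup + V + Rlin ≠ ⊤ := ENNReal.add_ne_top.mpr ⟨hfin1, hRlin_ne⟩
    have hreal : (1:ℝ) ≤ sup + V.toReal + risk := by
      have h := ENNReal.toReal_mono hfin hmain
      rw [ENNReal.toReal_add hfin1 hRlin_ne, ENNReal.toReal_add ENNReal.ofReal_ne_top hV,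
        ENNReal.toReal_ofReal hsup0] at h
      rw [hrisk_eq]
      simpa using h
    have h2 : 1 - sup - risk ≤ V.toReal := by linarith
    have hVe : ((V : ℝ≥0∞) : EReal) = ((V.toReal : ℝ) : EReal) := by
      conv_lhs => rw [← ENNReal.ofReal_toReal hV]
      rw [EReal.coe_ennreal_ofReal, max_eq_left ENNReal.toReal_nonneg]
    rw [hVe]
    exact EReal.coe_le_coe_iff.mpr h2
  linarith [EReal.coe_le_coe_iff.mp hkey]
end
end

section
/- Let Θ = A = {1,…,N}, L(θ,a) = 1{θ≠a}, and let w be the uniform prior. Suppose h² := (1/N²) Σ_{i,j} H²(P_{θ_i}‖P_{θ_j}) ≤ 2(1 - 1/N). Then the Bayes risk R satisfies R ≥ 1 - 1/N - ((N-2)/N)·(h²/2) - (√(N-1)/N)·√(h²(2-h²)). -/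
open MeasureTheory Filter Set
open scoped ENNReal NNReal

noncomputable section

section AuxLemmas

variable {X : Type*} [MeasurableSpace X]

lemma my_sqrt_le_one_add {t : ℝ} (ht : 0 ≤ t) : Real.sqrt t ≤ 1 + t := by
  nlinarith [sq_nonneg (1 - Real.sqrt t), Real.sq_sqrt ht, Real.sqrt_nonneg t]

lemma my_integrable_sqrt_rnDeriv (P Q : Measure X) [IsFiniteMeasure P] [IsFiniteMeasure Q] :
    Integrable (fun x => Real.sqrt ((P.rnDeriv Q x).toReal)) Q := by
  have hi : Integrable (fun x => 1 + ((P.rnDeriv Q x).toReal)) Q :=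
    (integrable_const 1).add (Measure.integrable_toReal_rnDeriv)
  refine hi.mono' ((Measure.measurable_rnDeriv P Q).ennreal_toReal.sqrt).aestronglyMeasurable
    (ae_of_all _ fun x => ?_)
  rw [Real.norm_eq_abs, abs_of_nonneg (Real.sqrt_nonneg _)]
  exact my_sqrt_le_one_add ENNReal.toReal_nonneg

lemma my_hellingerSq_eq (P Q : Measure X) [IsProbabilityMeasure P] [IsProbabilityMeasure Q] :
    hellingerSq P Q = 2 - 2 * ∫ x, Real.sqrt ((P.rnDeriv Q x).toReal) ∂Q := by
  have h1 : ∫ x, (1 - Real.sqrt ((P.rnDeriv Q x).toReal)) ∂Q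
      = 1 - ∫ x, Real.sqrt ((P.rnDeriv Q x).toReal) ∂Q := by
    rw [integral_sub (integrable_const 1) (my_integrable_sqrt_rnDeriv P Q)]
    simp
  rw [hellingerSq, fDiv, zero_mul, add_zero, EReal.toReal_coe, h1]
  ring

lemma my_ofReal_sqrt_toReal {r : ℝ≥0∞} (hr : r ≠ ∞) :
    ENNReal.ofReal (Real.sqrt r.toReal) = r ^ (1/2 : ℝ) := by
  rw [Real.sqrt_eq_rpow, ← ENNReal.ofReal_rpow_of_nonneg ENNReal.toReal_nonneg (by norm_num),
    ENNReal.ofReal_toReal hr]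

lemma my_rpow_half_self (y : ℝ≥0∞) : y ^ (1/2:ℝ) * y ^ (1/2:ℝ) = y := by
  rcases eq_or_ne y 0 with rfl | hy0
  · simp [ENNReal.zero_rpow_of_pos (by norm_num : (0:ℝ) < 1/2)]
  rcases eq_or_ne y ∞ with rfl | hyt
  · simp [ENNReal.top_rpow_of_pos (by norm_num : (0:ℝ) < 1/2)]
  rw [← ENNReal.rpow_add _ _ hy0 hyt]
  norm_num

lemma my_rpow_half_mul (x : ℝ≥0∞) (y : ℝ≥0∞) :
    x ^ (1/2:ℝ) * y = (x * y) ^ (1/2:ℝ) * y ^ (1/2:ℝ) := by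
  rw [ENNReal.mul_rpow_of_nonneg _ _ (by norm_num : (0:ℝ) ≤ 1/2), mul_assoc, my_rpow_half_self]

lemma my_rpow_half_mul_le (x y : ℝ≥0∞) : x ^ (1/2:ℝ) * y ^ (1/2:ℝ) ≤ x + y := by
  rcases le_total x y with h | h
  · calc x ^ (1/2:ℝ) * y ^ (1/2:ℝ) ≤ y ^ (1/2:ℝ) * y ^ (1/2:ℝ) :=
        mul_le_mul_left (ENNReal.rpow_le_rpow h (by norm_num)) _
      _ = y := my_rpow_half_self y
      _ ≤ x + y := le_add_self
  · calc x ^ (1/2:ℝ) * y ^ (1/2:ℝ) ≤ x ^ (1/2:ℝ) * x ^ (1/2:ℝ) :=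
        mul_le_mul_right (ENNReal.rpow_le_rpow h (by norm_num)) _
      _ = x := my_rpow_half_self x
      _ ≤ x + y := le_self_add

end AuxLemmas

section Aux2

variable {X : Type*} [MeasurableSpace X]

lemma my_affinity_le (P Q ν : Measure X) [IsFiniteMeasure P] [IsFiniteMeasure Q]
    [IsFiniteMeasure ν] (hQν : Q ≪ ν) :
    ∫ x, Real.sqrt ((P.rnDeriv Q x).toReal) ∂Q
      ≤ ∫ x, Real.sqrt ((P.rnDeriv ν x).toReal) * Real.sqrt ((Q.rnDeriv ν x).toReal) ∂ν := by
  have mPQ := Measure.measurable_rnDeriv P Q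
  have mP := Measure.measurable_rnDeriv P ν
  have mQ := Measure.measurable_rnDeriv Q ν
  set Pac := Q.withDensity (P.rnDeriv Q) with hPacdef
  have mPacQ := Measure.measurable_rnDeriv Pac Q
  have hRfin : ∫⁻ x, (P.rnDeriv ν x) ^ (1/2:ℝ) * (Q.rnDeriv ν x) ^ (1/2:ℝ) ∂ν ≠ ∞ := by
    refine ne_of_lt (lt_of_le_of_lt (lintegral_mono fun x => my_rpow_half_mul_le _ _) ?_)
    rw [lintegral_add_left mP]
    exact ENNReal.add_lt_top.mpr
      ⟨Measure.lintegral_rnDeriv_lt_top _ _, Measure.lintegral_rnDeriv_lt_top _ _⟩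
  have step1 : ∫⁻ x, ENNReal.ofReal (Real.sqrt ((P.rnDeriv Q x).toReal)) ∂Q
      = ∫⁻ x, (Pac.rnDeriv Q x) ^ (1/2:ℝ) ∂Q := by
    refine lintegral_congr_ae ?_
    filter_upwards [Measure.rnDeriv_lt_top P Q, Measure.rnDeriv_withDensity Q mPQ] with x h1 h2
    rw [my_ofReal_sqrt_toReal h1.ne, h2]
  have step2 : ∫⁻ x, (Pac.rnDeriv Q x) ^ (1/2:ℝ) ∂Q
      = ∫⁻ x, (Q.rnDeriv ν x) * (Pac.rnDeriv Q x) ^ (1/2:ℝ) ∂ν := by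
    nth_rewrite 1 [← Measure.withDensity_rnDeriv_eq Q ν hQν]
    rw [lintegral_withDensity_eq_lintegral_mul ν mQ (mPacQ.pow measurable_const)]
    rfl
  have step3 : ∫⁻ x, (Q.rnDeriv ν x) * (Pac.rnDeriv Q x) ^ (1/2:ℝ) ∂ν
      ≤ ∫⁻ x, (P.rnDeriv ν x) ^ (1/2:ℝ) * (Q.rnDeriv ν x) ^ (1/2:ℝ) ∂ν := by
    have hmul : Pac.rnDeriv Q * Q.rnDeriv ν =ᵐ[ν] Pac.rnDeriv ν :=
      Measure.rnDeriv_mul_rnDeriv (withDensity_absolutelyContinuous Q _)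
    have hle : Pac.rnDeriv ν ≤ᵐ[ν] P.rnDeriv ν := by
      have h := Measure.rnDeriv_add' (P.singularPart Q) Pac ν
      rw [Measure.singularPart_add_rnDeriv P Q] at h
      filter_upwards [h] with x hx
      rw [hx]; exact le_add_self
    refine lintegral_mono_ae ?_
    filter_upwards [hmul, hle] with x h1 h2
    calc Q.rnDeriv ν x * (Pac.rnDeriv Q x) ^ (1/2:ℝ)
        = (Pac.rnDeriv Q x) ^ (1/2:ℝ) * Q.rnDeriv ν x := mul_comm _ _
      _ = (Pac.rnDeriv Q x * Q.rnDeriv ν x) ^ (1/2:ℝ) * (Q.rnDeriv ν x) ^ (1/2:ℝ) :=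
          my_rpow_half_mul _ _
      _ = (Pac.rnDeriv ν x) ^ (1/2:ℝ) * (Q.rnDeriv ν x) ^ (1/2:ℝ) := by
          rw [show Pac.rnDeriv Q x * Q.rnDeriv ν x = Pac.rnDeriv ν x from h1]
      _ ≤ (P.rnDeriv ν x) ^ (1/2:ℝ) * (Q.rnDeriv ν x) ^ (1/2:ℝ) :=
          mul_le_mul_left (ENNReal.rpow_le_rpow h2 (by norm_num)) _
  have stepR : ∫⁻ x, ENNReal.ofReal
        (Real.sqrt ((P.rnDeriv ν x).toReal) * Real.sqrt ((Q.rnDeriv ν x).toReal)) ∂ν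
      = ∫⁻ x, (P.rnDeriv ν x) ^ (1/2:ℝ) * (Q.rnDeriv ν x) ^ (1/2:ℝ) ∂ν := by
    refine lintegral_congr_ae ?_
    filter_upwards [Measure.rnDeriv_lt_top P ν, Measure.rnDeriv_lt_top Q ν] with x h1 h2
    rw [ENNReal.ofReal_mul (Real.sqrt_nonneg _), my_ofReal_sqrt_toReal h1.ne,
      my_ofReal_sqrt_toReal h2.ne]
  rw [integral_eq_lintegral_of_nonneg_ae (ae_of_all _ fun x => Real.sqrt_nonneg _)
      (mPQ.ennreal_toReal.sqrt).aestronglyMeasurable,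
    integral_eq_lintegral_of_nonneg_ae
      (ae_of_all _ fun x => mul_nonneg (Real.sqrt_nonneg _) (Real.sqrt_nonneg _))
      ((mP.ennreal_toReal.sqrt).mul (mQ.ennreal_toReal.sqrt)).aestronglyMeasurable]
  refine ENNReal.toReal_mono (by rw [stepR]; exact hRfin) ?_
  rw [step1, step2, stepR]
  exact step3

lemma my_integrable_sqrt_mul_sqrt {μ : Measure X} {u v : X → ℝ}
    (hu : Integrable u μ) (hv : Integrable v μ) (hu0 : ∀ x, 0 ≤ u x) (hv0 : ∀ x, 0 ≤ v x)
    (hm : AEStronglyMeasurable (fun x => Real.sqrt (u x) * Real.sqrt (v x)) μ) :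
    Integrable (fun x => Real.sqrt (u x) * Real.sqrt (v x)) μ := by
  refine ((hu.add hv).div_const 2).mono' hm (ae_of_all _ fun x => ?_)
  rw [Real.norm_eq_abs, abs_of_nonneg (mul_nonneg (Real.sqrt_nonneg _) (Real.sqrt_nonneg _))]
  simp only [Pi.add_apply]
  nlinarith [sq_nonneg (Real.sqrt (u x) - Real.sqrt (v x)), Real.sq_sqrt (hu0 x),
    Real.sq_sqrt (hv0 x)]

lemma my_integral_sqrt_mul_sqrt_le {μ : Measure X} {u v : X → ℝ}
    (hu : Integrable u μ) (hv : Integrable v μ) (hu0 : ∀ x, 0 ≤ u x) (hv0 : ∀ x, 0 ≤ v x)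
    (hm : AEStronglyMeasurable (fun x => Real.sqrt (u x) * Real.sqrt (v x)) μ) :
    ∫ x, Real.sqrt (u x) * Real.sqrt (v x) ∂μ
      ≤ Real.sqrt (∫ x, u x ∂μ) * Real.sqrt (∫ x, v x ∂μ) := by
  have hint := my_integrable_sqrt_mul_sqrt hu hv hu0 hv0 hm
  set U := ∫ x, u x ∂μ with hUdef
  set V := ∫ x, v x ∂μ with hVdef
  have hU0 : 0 ≤ U := integral_nonneg hu0
  have hV0 : 0 ≤ V := integral_nonneg hv0
  rcases eq_or_lt_of_le hU0 with hU | hU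
  · have hu_ae : u =ᵐ[μ] 0 := (integral_eq_zero_iff_of_nonneg hu0 hu).mp hU.symm
    have : (fun x => Real.sqrt (u x) * Real.sqrt (v x)) =ᵐ[μ] 0 := by
      filter_upwards [hu_ae] with x hx
      simp [hx]
    rw [integral_congr_ae this]
    simpa using mul_nonneg (Real.sqrt_nonneg U) (Real.sqrt_nonneg V)
  rcases eq_or_lt_of_le hV0 with hV | hV
  · have hv_ae : v =ᵐ[μ] 0 := (integral_eq_zero_iff_of_nonneg hv0 hv).mp hV.symm
    have : (fun x => Real.sqrt (u x) * Real.sqrt (v x)) =ᵐ[μ] 0 := by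
      filter_upwards [hv_ae] with x hx
      simp [hx]
    rw [integral_congr_ae this]
    simpa using mul_nonneg (Real.sqrt_nonneg U) (Real.sqrt_nonneg V)
  set t : ℝ := Real.sqrt U / Real.sqrt V with htdef
  have ht : 0 < t := div_pos (Real.sqrt_pos.mpr hU) (Real.sqrt_pos.mpr hV)
  have hpt : ∀ x, Real.sqrt (u x) * Real.sqrt (v x) ≤ (u x / t + t * v x) / 2 := by
    intro x
    have h1 : u x / t * t = u x := div_mul_cancel₀ _ ht.ne'
    nlinarith [sq_nonneg (Real.sqrt (u x) - t * Real.sqrt (v x)), Real.sq_sqrt (hu0 x),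
      Real.sq_sqrt (hv0 x), ht, mul_pos ht ht]
  have hint2 : Integrable (fun x => (u x / t + t * v x) / 2) μ :=
    ((hu.div_const t).add (hv.const_mul t)).div_const 2
  have hmono := integral_mono hint hint2 hpt
  have hcomp : ∫ x, (u x / t + t * v x) / 2 ∂μ = (U / t + t * V) / 2 := by
    rw [integral_div, integral_add (hu.div_const t) (hv.const_mul t), integral_div,
      integral_const_mul]
  have hval : (U / t + t * V) / 2 = Real.sqrt U * Real.sqrt V := by
    have hsU : Real.sqrt U * Real.sqrt U = U := Real.mul_self_sqrt hU0
    have hsV : Real.sqrt V * Real.sqrt V = V := Real.mul_self_sqrt hV0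
    have hsU0 : 0 < Real.sqrt U := Real.sqrt_pos.mpr hU
    have hsV0 : 0 < Real.sqrt V := Real.sqrt_pos.mpr hV
    rw [htdef]
    field_simp
    nlinarith [hsU, hsV]
  rw [hcomp, hval] at hmono
  exact hmono

end Aux2

section Aux3

variable {X : Type*} [MeasurableSpace X]

lemma my_hellingerSq_nonneg (P Q : Measure X) [IsProbabilityMeasure P]
    [IsProbabilityMeasure Q] : 0 ≤ hellingerSq P Q := by
  rw [my_hellingerSq_eq]
  have hu : Integrable (fun x => ((P.rnDeriv Q x)).toReal) Q :=
    Measure.integrable_toReal_rnDeriv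
  have hone : Integrable (fun _ : X => (1:ℝ)) Q := integrable_const 1
  have h := my_integral_sqrt_mul_sqrt_le hu hone (fun x => ENNReal.toReal_nonneg)
    (fun _ => zero_le_one)
    ((Measure.measurable_rnDeriv P Q).ennreal_toReal.sqrt.mul
      measurable_const).aestronglyMeasurable
  simp only [Real.sqrt_one, mul_one] at h
  have hle1 : ∫ x, ((P.rnDeriv Q x)).toReal ∂Q ≤ 1 := by
    rw [Measure.integral_toReal_rnDeriv']
    have h1 : P.real Set.univ = 1 := by simp
    have h2 : 0 ≤ (P.singularPart Q).real Set.univ := measureReal_nonneg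
    linarith
  have hint1 : ∫ (_ : X), (1:ℝ) ∂Q = 1 := by simp
  rw [hint1, Real.sqrt_one, mul_one] at h
  have : Real.sqrt (∫ x, ((P.rnDeriv Q x)).toReal ∂Q) ≤ 1 := by
    rw [show (1:ℝ) = Real.sqrt 1 from (Real.sqrt_one).symm]
    exact Real.sqrt_le_sqrt (by simpa using hle1)
  nlinarith [h, this]

lemma my_scalar_core (n R t u v s1 : ℝ) (hn : 2 ≤ n) (hR0 : 0 ≤ R)
    (ht0 : 0 ≤ t) (htn : n * t ≤ n - 1)
    (hu0 : 0 ≤ u) (hu2 : u^2 = R*(1-R)) (hv0 : 0 ≤ v) (hv2 : v^2 = t*(1-t))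
    (hs1 : 0 ≤ s1) (hs2 : s1^2 = n - 1)
    (hyp : (n-1) - n*t ≤ (n-2)*R + 2*s1*u) :
    (n-1) - (n-2)*t - 2*s1*v ≤ n*R := by
  have hsv : 0 ≤ 2*s1*v := by positivity
  have hsu : 0 ≤ 2*s1*u := by positivity
  rcases le_or_gt ((n-1) - n*R) ((n-2)*t) with h1 | h1
  · linarith
  · rcases le_or_gt ((n-1) - n*t - (n-2)*R) 0 with h2 | h2
    · have key : (n-1) - n*R - (n-2)*t ≤ 2*t := by linarith
      have hpos : 0 < (n-1) - n*R - (n-2)*t := by linarith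
      have h3 : (2*t)^2 ≤ 4*(n-1)*(t*(1-t)) := by
        nlinarith [mul_nonneg ht0 (by linarith : (0:ℝ) ≤ n - 1 - n*t)]
      have hv22 : (2*s1*v)^2 = 4*(n-1)*(t*(1-t)) := by
        rw [mul_pow, mul_pow, hs2, hv2]; ring
      have hsq : ((n-1) - n*R - (n-2)*t)^2 ≤ (2*s1*v)^2 := by
        calc ((n-1) - n*R - (n-2)*t)^2 ≤ (2*t)^2 := by
              apply pow_le_pow_left₀ hpos.le key
          _ ≤ (2*s1*v)^2 := by rw [hv22]; exact h3
      nlinarith [hsq, hpos, hsv]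
    · have hb : (n-1) - n*t - (n-2)*R ≤ 2*s1*u := by linarith
      have hsqu : ((n-1) - n*t - (n-2)*R)^2 ≤ (2*s1*u)^2 := pow_le_pow_left₀ h2.le hb 2
      have hid : ((n-1) - n*R - (n-2)*t)^2 - (2*s1*v)^2
          = ((n-1) - n*t - (n-2)*R)^2 - (2*s1*u)^2 := by
        rw [mul_pow, mul_pow, mul_pow, mul_pow, hs2, hv2, hu2]; ring
      have hsq : ((n-1) - n*R - (n-2)*t)^2 ≤ (2*s1*v)^2 := by linarith
      have hpos : 0 < (n-1) - n*R - (n-2)*t := by linarith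
      nlinarith [hsq, hpos, hsv]

end Aux3

section Core

variable {X : Type*} [MeasurableSpace X]

lemma my_core {N : ℕ} (hN1 : 1 ≤ N) (P : Fin N → Measure X)
    (hP : ∀ i, IsProbabilityMeasure (P i)) (d : X → Fin N) (hd : Measurable d) :
    ∑ i, ∑ j, (1 - hellingerSq (P i) (P j) / 2)
      ≤ (∑ i, ((P i) {x | d x = i}).toReal)
        + 2 * Real.sqrt ((N:ℝ)-1) *
          (Real.sqrt (∑ i, ((P i) {x | d x = i}).toReal)
            * Real.sqrt ((N:ℝ) - ∑ i, ((P i) {x | d x = i}).toReal))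
        + ((N:ℝ)-1) * ((N:ℝ) - ∑ i, ((P i) {x | d x = i}).toReal) := by
  classical
  set ν : Measure X := ∑ i, P i with hν
  haveI : IsFiniteMeasure ν := by
    constructor
    have h : ν Set.univ = ∑ i : Fin N, (P i) Set.univ := Measure.finset_sum_apply _ _ _
    rw [h]
    have : ∀ i : Fin N, (P i) Set.univ = 1 := fun i => (hP i).measure_univ
    simp only [this, Finset.sum_const, Finset.card_univ, Fintype.card_fin, nsmul_eq_mul, mul_one]
    exact ENNReal.natCast_lt_top N
  have hac : ∀ i, P i ≪ ν := by
    intro i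
    refine Measure.AbsolutelyContinuous.mk fun sSet hms h0 => ?_
    rw [hν, Measure.finset_sum_apply] at h0
    exact (Finset.sum_eq_zero_iff.mp h0) i (Finset.mem_univ i)
  have hpm : ∀ i : Fin N, Measurable (fun x => ((P i).rnDeriv ν x).toReal) :=
    fun i => (Measure.measurable_rnDeriv _ _).ennreal_toReal
  set p : Fin N → X → ℝ := fun i x => ((P i).rnDeriv ν x).toReal with hp
  set g : Fin N → X → ℝ := fun i x => Real.sqrt (p i x) with hg
  have hp0 : ∀ i x, 0 ≤ p i x := fun i x => ENNReal.toReal_nonneg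
  have hpi : ∀ i, Integrable (p i) ν := fun i => by
    haveI := hP i; exact Measure.integrable_toReal_rnDeriv
  have hpint : ∀ i, ∫ x, p i x ∂ν = 1 := fun i => by
    haveI := hP i
    rw [hp]
    rw [Measure.integral_toReal_rnDeriv (hac i)]
    simp
  have hgm : ∀ i, Measurable (g i) := fun i => (hpm i).sqrt
  have hg0 : ∀ i x, 0 ≤ g i x := fun i x => Real.sqrt_nonneg _
  have hgg : ∀ i j, Integrable (fun x => g i x * g j x) ν := fun i j =>
    my_integrable_sqrt_mul_sqrt (hpi i) (hpi j) (hp0 i) (hp0 j)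
      ((hgm i).mul (hgm j)).aestronglyMeasurable
  have key1 : ∀ i j, 1 - hellingerSq (P i) (P j) / 2 ≤ ∫ x, g i x * g j x ∂ν := by
    intro i j
    haveI := hP i; haveI := hP j
    rw [my_hellingerSq_eq]
    have h := my_affinity_le (P i) (P j) ν (hac j)
    have h2 : ∫ x, Real.sqrt (((P i).rnDeriv ν x).toReal)
        * Real.sqrt (((P j).rnDeriv ν x).toReal) ∂ν = ∫ x, g i x * g j x ∂ν := rfl
    rw [h2] at h
    linarith
  set A : ℝ := ∑ i, ((P i) {x | d x = i}).toReal with hA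
  have hmeas_set : ∀ i : Fin N, MeasurableSet {x | d x = i} :=
    fun i => hd (measurableSet_singleton i)
  set a : X → ℝ := fun x => ∑ i, Set.indicator {x | d x = i} (p i) x with ha
  set s : X → ℝ := fun x => (∑ i, p i x) - a x with hs
  have ham : Measurable a := Finset.measurable_sum _ fun i _ => (hpm i).indicator (hmeas_set i)
  have hsm : Measurable s := (Finset.measurable_sum _ fun i _ => hpm i).sub ham
  have ha_eq : ∀ x, a x = p (d x) x := by
    intro x
    rw [ha]
    simp only [Set.indicator_apply, Set.mem_setOf_eq]
    rw [Finset.sum_ite_eq Finset.univ (d x) (fun i => p i x)]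
    simp
  have ha0 : ∀ x, 0 ≤ a x := fun x => by rw [ha_eq]; exact hp0 _ x
  have hs0 : ∀ x, 0 ≤ s x := by
    intro x
    have h1 : p (d x) x ≤ ∑ i, p i x :=
      Finset.single_le_sum (fun i _ => hp0 i x) (Finset.mem_univ _)
    have : s x = (∑ i, p i x) - a x := rfl
    rw [this, ha_eq]
    linarith
  have hai : Integrable a ν := integrable_finset_sum _ fun i _ =>
    (hpi i).indicator (hmeas_set i)
  have hsi : Integrable s ν := (integrable_finset_sum _ fun i _ => hpi i).sub hai
  have haA : ∫ x, a x ∂ν = A := by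
    rw [ha]
    rw [integral_finset_sum _ fun i _ => (hpi i).indicator (hmeas_set i)]
    refine Finset.sum_congr rfl fun i _ => ?_
    rw [integral_indicator (hmeas_set i)]
    haveI := hP i
    exact Measure.setIntegral_toReal_rnDeriv (hac i) _
  have hsS : ∫ x, s x ∂ν = (N:ℝ) - A := by
    rw [hs]
    rw [integral_sub (integrable_finset_sum _ fun i _ => hpi i) hai,
      integral_finset_sum _ fun i _ => hpi i, haA]
    simp only [hpint, Finset.sum_const, Finset.card_univ, Fintype.card_fin, nsmul_eq_mul,
      mul_one]
  have hN1' : (1:ℝ) ≤ (N:ℝ) := by exact_mod_cast hN1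
  have hstep3 : ∀ x, (∑ i, g i x)^2
      ≤ a x + 2 * Real.sqrt ((N:ℝ)-1) * (Real.sqrt (a x) * Real.sqrt (s x))
        + ((N:ℝ)-1) * s x := by
    intro x
    have hsum : ∑ i, g i x = g (d x) x + ∑ i ∈ Finset.univ.erase (d x), g i x :=
      (Finset.add_sum_erase _ _ (Finset.mem_univ (d x))).symm
    have hcard : (((Finset.univ.erase (d x)).card : ℕ) : ℝ) = (N:ℝ) - 1 := by
      rw [Finset.card_erase_of_mem (Finset.mem_univ _), Finset.card_univ, Fintype.card_fin]
      rw [Nat.cast_sub hN1]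
      simp
    have hserase : ∑ i ∈ Finset.univ.erase (d x), p i x = s x := by
      rw [Finset.sum_erase_eq_sub (Finset.mem_univ (d x))]
      have : s x = (∑ i, p i x) - a x := rfl
      rw [this, ha_eq]
    have hT2 : (∑ i ∈ Finset.univ.erase (d x), g i x)^2 ≤ ((N:ℝ)-1) * s x := by
      have h := sq_sum_le_card_mul_sum_sq (s := Finset.univ.erase (d x))
        (f := fun i => g i x)
      have hsq : ∀ i ∈ Finset.univ.erase (d x), (g i x)^2 = p i x := fun i _ =>
        Real.sq_sqrt (hp0 i x)
      calc (∑ i ∈ Finset.univ.erase (d x), g i x)^2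
          ≤ ((Finset.univ.erase (d x)).card : ℝ)
            * ∑ i ∈ Finset.univ.erase (d x), (g i x)^2 := h
        _ = ((N:ℝ)-1) * s x := by
            rw [hcard, Finset.sum_congr rfl hsq, hserase]
    have hT0 : 0 ≤ ∑ i ∈ Finset.univ.erase (d x), g i x :=
      Finset.sum_nonneg fun i _ => hg0 i x
    have hT : ∑ i ∈ Finset.univ.erase (d x), g i x ≤ Real.sqrt (((N:ℝ)-1) * s x) := by
      rw [← Real.sqrt_sq hT0]
      exact Real.sqrt_le_sqrt hT2
    have hgka : g (d x) x = Real.sqrt (a x) := by rw [ha_eq]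
    have hgk2 : (g (d x) x)^2 = a x := by rw [hgka]; exact Real.sq_sqrt (ha0 x)
    have hsplit : Real.sqrt (((N:ℝ)-1) * s x) = Real.sqrt ((N:ℝ)-1) * Real.sqrt (s x) :=
      Real.sqrt_mul (by linarith) _
    have hgk0 : 0 ≤ g (d x) x := hg0 _ x
    have hcross : g (d x) x * (∑ i ∈ Finset.univ.erase (d x), g i x)
        ≤ Real.sqrt (a x) * (Real.sqrt ((N:ℝ)-1) * Real.sqrt (s x)) := by
      rw [← hgka, ← hsplit]
      exact mul_le_mul_of_nonneg_left hT hgk0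
    rw [hsum]
    nlinarith [hcross, hT2, hgk2]
  have hsq_int : Integrable (fun x => (∑ i, g i x)^2) ν := by
    have heq : (fun x => (∑ i, g i x)^2) = fun x => ∑ i, ∑ j, g i x * g j x := by
      funext x; rw [sq, Finset.sum_mul_sum]
    rw [heq]
    exact integrable_finset_sum _ fun i _ => integrable_finset_sum _ fun j _ => hgg i j
  have hexp : ∫ x, (∑ i, g i x)^2 ∂ν = ∑ i, ∑ j, ∫ x, g i x * g j x ∂ν := by
    have heq : ∫ x, (∑ i, g i x)^2 ∂ν = ∫ x, ∑ i, ∑ j, g i x * g j x ∂ν := by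
      congr 1; funext x; rw [sq, Finset.sum_mul_sum]
    rw [heq, integral_finset_sum _ fun i _ => integrable_finset_sum _ fun j _ => hgg i j]
    exact Finset.sum_congr rfl fun i _ => integral_finset_sum _ fun j _ => hgg i j
  have hsqrtas_int : Integrable (fun x => Real.sqrt (a x) * Real.sqrt (s x)) ν :=
    my_integrable_sqrt_mul_sqrt hai hsi ha0 hs0 (ham.sqrt.mul hsm.sqrt).aestronglyMeasurable
  have hB_int : Integrable (fun x => a x
      + 2 * Real.sqrt ((N:ℝ)-1) * (Real.sqrt (a x) * Real.sqrt (s x))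
      + ((N:ℝ)-1) * s x) ν :=
    (hai.add (hsqrtas_int.const_mul _)).add (hsi.const_mul _)
  have hmono := integral_mono hsq_int hB_int hstep3
  have hBval : ∫ x, (a x + 2 * Real.sqrt ((N:ℝ)-1) * (Real.sqrt (a x) * Real.sqrt (s x))
        + ((N:ℝ)-1) * s x) ∂ν
      = A + 2 * Real.sqrt ((N:ℝ)-1) * (∫ x, Real.sqrt (a x) * Real.sqrt (s x) ∂ν)
        + ((N:ℝ)-1) * ((N:ℝ) - A) := by
    have hint0 : Integrable (fun x => 2 * Real.sqrt ((N:ℝ)-1)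
        * (Real.sqrt (a x) * Real.sqrt (s x))) ν := hsqrtas_int.const_mul _
    have hint1 : Integrable (fun x => a x + 2 * Real.sqrt ((N:ℝ)-1)
        * (Real.sqrt (a x) * Real.sqrt (s x))) ν := hai.add hint0
    have hint2 : Integrable (fun x => ((N:ℝ)-1) * s x) ν := hsi.const_mul _
    rw [integral_add hint1 hint2, integral_add hai hint0]
    rw [integral_const_mul, integral_const_mul, haA, hsS]
  have hcs := my_integral_sqrt_mul_sqrt_le hai hsi ha0 hs0
    (ham.sqrt.mul hsm.sqrt).aestronglyMeasurable
  rw [haA, hsS] at hcs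
  have hfin : 0 ≤ 2 * Real.sqrt ((N:ℝ)-1) := by positivity
  calc ∑ i, ∑ j, (1 - hellingerSq (P i) (P j) / 2)
      ≤ ∑ i, ∑ j, ∫ x, g i x * g j x ∂ν :=
        Finset.sum_le_sum fun i _ => Finset.sum_le_sum fun j _ => key1 i j
    _ = ∫ x, (∑ i, g i x)^2 ∂ν := hexp.symm
    _ ≤ ∫ x, (a x + 2 * Real.sqrt ((N:ℝ)-1) * (Real.sqrt (a x) * Real.sqrt (s x))
        + ((N:ℝ)-1) * s x) ∂ν := hmono
    _ = A + 2 * Real.sqrt ((N:ℝ)-1) * (∫ x, Real.sqrt (a x) * Real.sqrt (s x) ∂ν)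
        + ((N:ℝ)-1) * ((N:ℝ) - A) := hBval
    _ ≤ A + 2 * Real.sqrt ((N:ℝ)-1) * (Real.sqrt A * Real.sqrt ((N:ℝ) - A))
        + ((N:ℝ)-1) * ((N:ℝ) - A) := by
        have := mul_le_mul_of_nonneg_left hcs hfin
        linarith

end Core

set_option maxHeartbeats 1600000 in
/-- Hellinger Bayes risk lower bound for `N` hypotheses under the uniform
prior and zero-one loss: if `h² = (1/N²) Σ_{i,j} H²(P_i‖P_j) ≤ 2(1 - 1/N)` then
`R ≥ 1 - 1/N - ((N-2)/N)(h²/2) - (√(N-1)/N)√(h²(2-h²))`. -/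
theorem hellinger_discrete_bayes_lower_bound {X : Type*} [MeasurableSpace X]
    (N : ℕ) (hN : 1 ≤ N)
    (P : Fin N → Measure X) (hP : ∀ i, IsProbabilityMeasure (P i))
    (h2 : ℝ)
    (hh2 : h2 = (1 / (N:ℝ)^2) * ∑ i, ∑ j, hellingerSq (P i) (P j))
    (hle : h2 ≤ 2 * (1 - 1/(N:ℝ))) :
    1 - 1/(N:ℝ) - ((N:ℝ) - 2)/(N:ℝ) * (h2/2)
        - (Real.sqrt ((N:ℝ) - 1) / (N:ℝ)) * Real.sqrt (h2 * (2 - h2))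
      ≤ ⨅ d : {d : X → Fin N // Measurable d},
          (1/(N:ℝ)) * ∑ i, ((P i) {x | d.1 x ≠ i}).toReal := by
  classical
  have hN0 : (0:ℝ) < (N:ℝ) := by exact_mod_cast hN
  haveI : Nonempty {d : X → Fin N // Measurable d} :=
    ⟨⟨fun _ => ⟨0, hN⟩, measurable_const⟩⟩
  refine le_ciInf fun d => ?_
  have hRHS0 : 0 ≤ (1/(N:ℝ)) * ∑ i, ((P i) {x | d.1 x ≠ i}).toReal := by positivity
  rcases eq_or_lt_of_le hN with hN1 | hN2
  · -- N = 1
    have hc : (N:ℝ) = 1 := by exact_mod_cast hN1.symm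
    rw [hc] at hle hRHS0 ⊢
    have h0 : Real.sqrt ((1:ℝ) - 1) = 0 := by rw [sub_self, Real.sqrt_zero]
    rw [h0]
    norm_num at hle hRHS0 ⊢
    linarith
  -- N ≥ 2
  have hN2' : (2:ℝ) ≤ (N:ℝ) := by exact_mod_cast hN2
  set n : ℝ := (N:ℝ) with hn
  set A : ℝ := ∑ i, ((P i) {x | d.1 x = i}).toReal with hA
  have hcore := my_core hN P hP d.1 d.2
  rw [← hA, ← hn] at hcore
  have hA0 : 0 ≤ A := Finset.sum_nonneg fun i _ => ENNReal.toReal_nonneg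
  have hA1 : A ≤ n := by
    rw [hA]
    calc ∑ i, ((P i) {x | d.1 x = i}).toReal ≤ ∑ _i : Fin N, (1:ℝ) := by
          refine Finset.sum_le_sum fun i _ => ?_
          haveI := hP i
          have h1 : (P i) {x | d.1 x = i} ≤ 1 := prob_le_one
          calc ((P i) {x | d.1 x = i}).toReal ≤ (1:ℝ≥0∞).toReal :=
                ENNReal.toReal_mono ENNReal.one_ne_top h1
            _ = 1 := by simp
      _ = n := by simp [hn]
  have hrisk : ∑ i, ((P i) {x | d.1 x ≠ i}).toReal = n - A := by
    have hterm : ∀ i : Fin N, ((P i) {x | d.1 x ≠ i}).toReal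
        = 1 - ((P i) {x | d.1 x = i}).toReal := by
      intro i
      haveI := hP i
      have hms : MeasurableSet {x | d.1 x = i} := d.2 (measurableSet_singleton i)
      have hcompl : {x | d.1 x ≠ i} = {x | d.1 x = i}ᶜ := rfl
      rw [hcompl, prob_compl_eq_one_sub hms,
        ENNReal.toReal_sub_of_le prob_le_one ENNReal.one_ne_top]
      simp
    rw [Finset.sum_congr rfl fun i _ => hterm i, Finset.sum_sub_distrib]
    simp [hA, hn]
  -- rewrite the LHS of the core inequality
  have hsumH : ∑ i, ∑ j, (1 - hellingerSq (P i) (P j) / 2) = n^2 * (1 - h2/2) := by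
    have hn0 : n ≠ 0 := hN0.ne'
    have hSig : ∑ i, ∑ j, hellingerSq (P i) (P j) = n^2 * h2 := by
      rw [hh2]
      field_simp
    have hsplit : ∑ i : Fin N, ∑ j : Fin N, (1 - hellingerSq (P i) (P j) / 2)
        = (∑ _i : Fin N, ∑ _j : Fin N, (1:ℝ))
          - (∑ i, ∑ j, (hellingerSq (P i) (P j) / 2)) := by
      simp only [Finset.sum_sub_distrib]
    rw [hsplit]
    simp only [← Finset.sum_div]
    rw [hSig]
    simp only [Finset.sum_const, Finset.card_univ, Fintype.card_fin, nsmul_eq_mul, mul_one]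
    rw [← hn]
    ring
  rw [hsumH] at hcore
  -- h2 is nonneg
  have hH20 : 0 ≤ h2 := by
    rw [hh2]
    refine mul_nonneg (by positivity) (Finset.sum_nonneg fun i _ =>
      Finset.sum_nonneg fun j _ => ?_)
    haveI := hP i; haveI := hP j
    exact my_hellingerSq_nonneg _ _
  set t : ℝ := h2 / 2 with ht
  have ht0 : 0 ≤ t := by positivity
  have htn : n * t ≤ n - 1 := by
    have hinv : n * (1/n) = 1 := by field_simp
    have := mul_le_mul_of_nonneg_left hle (by positivity : (0:ℝ) ≤ n/2)
    calc n * t = n/2 * h2 := by rw [ht]; ring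
      _ ≤ n/2 * (2 * (1 - 1/n)) := this
      _ = n - n * (1/n) := by ring
      _ = n - 1 := by rw [hinv]
  have ht1 : t ≤ 1 := by nlinarith
  -- set up scalar quantities
  set R : ℝ := (n - A)/n with hR
  have hR0 : 0 ≤ R := div_nonneg (by linarith) hN0.le
  have hR1 : R ≤ 1 := by
    rw [hR, div_le_one hN0]
    linarith
  have e1 : A = n * (1 - R) := by
    rw [hR]
    field_simp
    ring
  have e2 : n - A = n * R := by
    rw [hR]
    field_simp
  set u : ℝ := Real.sqrt R * Real.sqrt (1 - R) with hu
  set v : ℝ := Real.sqrt t * Real.sqrt (1 - t) with hv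
  have hu0 : 0 ≤ u := by positivity
  have hv0 : 0 ≤ v := by positivity
  have hu2 : u^2 = R * (1 - R) := by
    rw [hu, mul_pow, Real.sq_sqrt hR0, Real.sq_sqrt (by linarith : (0:ℝ) ≤ 1 - R)]
  have hv2 : v^2 = t * (1 - t) := by
    rw [hv, mul_pow, Real.sq_sqrt ht0, Real.sq_sqrt (by linarith : (0:ℝ) ≤ 1 - t)]
  set s1 : ℝ := Real.sqrt (n - 1) with hs1def
  have hs10 : 0 ≤ s1 := Real.sqrt_nonneg _
  have hs12 : s1^2 = n - 1 := Real.sq_sqrt (by linarith)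
  have hAsqrt : Real.sqrt A * Real.sqrt (n - A) = n * u := by
    rw [e2, e1]
    calc Real.sqrt (n*(1-R)) * Real.sqrt (n*R)
        = (Real.sqrt n * Real.sqrt (1-R)) * (Real.sqrt n * Real.sqrt R) := by
          rw [Real.sqrt_mul hN0.le, Real.sqrt_mul hN0.le]
      _ = (Real.sqrt n * Real.sqrt n) * (Real.sqrt R * Real.sqrt (1-R)) := by ring
      _ = n * u := by rw [Real.mul_self_sqrt hN0.le, hu]
  rw [hAsqrt, e2, e1] at hcore
  have hyp : (n-1) - n*t ≤ (n-2)*R + 2*s1*u := by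
    have hyp' : n * ((n-1) - n*t) ≤ n * ((n-2)*R + 2*s1*u) := by
      nlinarith [hcore]
    exact le_of_mul_le_mul_left hyp' hN0
  have hfinal := my_scalar_core n R t u v s1 hN2' hR0 ht0 htn hu0 hu2 hv0 hv2 hs10 hs12 hyp
  -- finish
  rw [hrisk]
  have hh2t : h2 = 2*t := by rw [ht]; ring
  have hsqrt2v : Real.sqrt (h2 * (2 - h2)) = 2 * v := by
    have hsq : h2 * (2 - h2) = (2*v)^2 := by
      rw [hh2t]
      linear_combination (-4 : ℝ) * hv2
    rw [hsq, Real.sqrt_sq (by positivity)]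
  rw [hsqrt2v]
  have hgoal_eq : 1 - 1/n - (n-2)/n*t - s1/n*(2*v) = ((n-1) - (n-2)*t - 2*s1*v)/n := by
    field_simp
  have hRHSeq : (1/n)*(n-A) = R := by
    rw [hR]
    ring
  rw [hgoal_eq, hRHSeq, div_le_iff₀ hN0]
  nlinarith [hfinal]
end
end

section
/- The Hellinger informativity for a uniform prior on {θ_1,…,θ_N} admits the closed form I_{f_{1/2}}(w, P) = 1 - sqrt( 1 - (1/(2N²)) Σ_{i,j} H²(P_{θ_i}‖P_{θ_j}) ). More generally, for any prior w, inf_Q ∫ D_{f_{1/2}}(P_θ‖Q) w(dθ) = 1 - sqrt(∫_X u² dμ) where u(x) := ∫_Θ √(p_θ(x)) w(dθ). -/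
open MeasureTheory Filter Set
open scoped ENNReal NNReal

noncomputable section

section Helpers
variable {X : Type*} [MeasurableSpace X]

def affE (P Q : Measure X) : ℝ≥0∞ := ∫⁻ x, (P.rnDeriv Q x) ^ (1/2 : ℝ) ∂Q

lemma half_nonneg' : (0:ℝ) ≤ 1/2 := by norm_num

lemma rpow_half_self_mul (q : ℝ≥0∞) : q ^ (1/2:ℝ) * q ^ (1/2:ℝ) = q := by
  rw [← ENNReal.rpow_add_of_nonneg _ _ half_nonneg' half_nonneg']; norm_num

lemma lintegral_sqrt_mul_sqrt_le {μ : Measure X} {f g : X → ℝ≥0∞}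
    (hf : AEMeasurable f μ) (hg : AEMeasurable g μ) :
    ∫⁻ x, (f x) ^ (1/2 : ℝ) * (g x) ^ (1/2 : ℝ) ∂μ
      ≤ (∫⁻ x, f x ∂μ) ^ (1/2 : ℝ) * (∫⁻ x, g x ∂μ) ^ (1/2 : ℝ) := by
  have hpq : Real.HolderConjugate 2 2 := Real.HolderConjugate.two_two
  have h := ENNReal.lintegral_mul_le_Lp_mul_Lq μ hpq (f := fun x => f x ^ (1/2:ℝ))
    (g := fun x => g x ^ (1/2:ℝ))
    (hf.pow (aemeasurable_const (b := (1/2:ℝ)))) (hg.pow (aemeasurable_const (b := (1/2:ℝ))))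
  have e : ∀ (h : X → ℝ≥0∞) (x : X), ((h x) ^ (1/2 : ℝ)) ^ (2 : ℝ) = h x := by
    intro h x
    rw [← ENNReal.rpow_mul]
    norm_num
  simp only [e] at h
  exact h

lemma affE_le_one (P Q : Measure X) [IsProbabilityMeasure P] [IsProbabilityMeasure Q] :
    affE P Q ≤ 1 := by
  have h : affE P Q = ∫⁻ x, (P.rnDeriv Q x) ^ (1/2:ℝ) * (1:ℝ≥0∞) ^ (1/2:ℝ) ∂Q := by
    simp [affE]
  rw [h]
  calc ∫⁻ x, (P.rnDeriv Q x) ^ (1/2:ℝ) * (1:ℝ≥0∞) ^ (1/2:ℝ) ∂Q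
      ≤ (∫⁻ x, P.rnDeriv Q x ∂Q) ^ (1/2:ℝ) * (∫⁻ _, (1:ℝ≥0∞) ∂Q) ^ (1/2:ℝ) :=
        lintegral_sqrt_mul_sqrt_le (Measure.measurable_rnDeriv P Q).aemeasurable
          aemeasurable_const
    _ ≤ (1:ℝ≥0∞) ^ (1/2:ℝ) * (1:ℝ≥0∞) ^ (1/2:ℝ) := by
        gcongr
        · exact (Measure.lintegral_rnDeriv_le).trans (by simp)
        · simp
    _ = 1 := by simp

lemma affE_le (μ : Measure X) [SigmaFinite μ] {pd : X → ℝ≥0∞} (hpd : Measurable pd)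
    (Q : Measure X) [IsFiniteMeasure Q]
    {P : Measure X} (hP : P = μ.withDensity pd) [IsFiniteMeasure P] :
    affE P Q ≤ ∫⁻ x, (pd x * Q.rnDeriv μ x) ^ (1/2:ℝ) ∂μ := by
  set r := P.rnDeriv Q with hr
  have hrm : Measurable r := Measure.measurable_rnDeriv P Q
  set q := Q.rnDeriv μ with hq
  have hqm : Measurable q := Measure.measurable_rnDeriv Q μ
  have haff : affE P Q = ∫⁻ x, r x ^ (1/2:ℝ) ∂Q := rfl
  have hdec : Q = Q.singularPart μ + μ.withDensity q := Q.haveLebesgueDecomposition_add μ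
  have hsplit : ∫⁻ x, r x ^ (1/2:ℝ) ∂Q
      = ∫⁻ x, r x ^ (1/2:ℝ) ∂(Q.singularPart μ) + ∫⁻ x, r x ^ (1/2:ℝ) ∂(μ.withDensity q) := by
    conv_lhs => rw [hdec]
    exact lintegral_add_measure _ _ _
  obtain ⟨S, hSm, hS1, hS2⟩ := Q.mutuallySingular_singularPart μ
  have hPSc : P Sᶜ = 0 := by
    rw [hP, withDensity_apply _ hSm.compl, setLIntegral_measure_zero _ _ hS2]
  have hrQ0 : ∫⁻ x in Sᶜ, r x ∂Q = 0 := by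
    have h1 : ∫⁻ x in Sᶜ, r x ∂Q = (Q.withDensity r) Sᶜ := (withDensity_apply _ hSm.compl).symm
    have h2 : (Q.withDensity r) Sᶜ ≤ P Sᶜ := Measure.withDensity_rnDeriv_le P Q Sᶜ
    exact le_antisymm (by rw [h1]; exact h2.trans hPSc.le) zero_le
  have hrae : r =ᵐ[Q.restrict Sᶜ] 0 := (lintegral_eq_zero_iff hrm).mp hrQ0
  have hsing0 : ∫⁻ x, r x ^ (1/2:ℝ) ∂(Q.singularPart μ) = 0 := by
    rw [← lintegral_add_compl _ hSm]
    have e1 : ∫⁻ x in S, r x ^ (1/2:ℝ) ∂(Q.singularPart μ) = 0 := by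
      rw [Measure.restrict_eq_zero.mpr hS1]; simp
    have e2 : ∫⁻ x in Sᶜ, r x ^ (1/2:ℝ) ∂(Q.singularPart μ) = 0 := by
      refine le_antisymm ?_ zero_le
      have hcong : (fun x => r x ^ (1/2:ℝ)) =ᵐ[Q.restrict Sᶜ] (fun _ => 0) := by
        filter_upwards [hrae] with x hx
        rw [Pi.zero_apply] at hx
        rw [hx, ENNReal.zero_rpow_of_pos (by norm_num : (0:ℝ) < 1/2)]
      calc ∫⁻ x in Sᶜ, r x ^ (1/2:ℝ) ∂(Q.singularPart μ)
          ≤ ∫⁻ x in Sᶜ, r x ^ (1/2:ℝ) ∂Q :=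
            lintegral_mono' (Measure.restrict_mono subset_rfl (Q.singularPart_le μ)) le_rfl
        _ = 0 := by rw [lintegral_congr_ae hcong, lintegral_zero]
    rw [e1, e2, add_zero]
  have hrq : ∀ᵐ x ∂μ, r x * q x ≤ pd x := by
    refine ae_le_of_forall_setLIntegral_le_of_sigmaFinite (hrm.mul hqm) ?_
    intro s hs _
    have h1 : ∫⁻ x in s, r x * q x ∂μ = ∫⁻ x in s, r x ∂(μ.withDensity q) := by
      rw [setLIntegral_withDensity_eq_setLIntegral_mul _ hqm hrm hs]
      simp_rw [Pi.mul_apply, mul_comm]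
    have h2 : ∫⁻ x in s, r x ∂(μ.withDensity q) ≤ ∫⁻ x in s, r x ∂Q :=
      lintegral_mono' (Measure.restrict_mono subset_rfl (Measure.withDensity_rnDeriv_le Q μ))
        le_rfl
    have h3 : ∫⁻ x in s, r x ∂Q ≤ ∫⁻ x in s, pd x ∂μ := by
      have h := Measure.withDensity_rnDeriv_le P Q s
      rw [← withDensity_apply _ hs]
      refine h.trans (le_of_eq ?_)
      rw [hP, withDensity_apply _ hs]
    exact h1 ▸ (h2.trans h3)
  have hac : ∫⁻ x, r x ^ (1/2:ℝ) ∂(μ.withDensity q) ≤ ∫⁻ x, (pd x * q x) ^ (1/2:ℝ) ∂μ := by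
    rw [lintegral_withDensity_eq_lintegral_mul _ hqm (hrm.pow_const _)]
    refine lintegral_mono_ae ?_
    filter_upwards [hrq] with x h1
    have key : q x * r x ^ (1/2:ℝ) = (q x * (q x * r x)) ^ (1/2:ℝ) := by
      rw [ENNReal.mul_rpow_of_nonneg _ _ half_nonneg',
        ENNReal.mul_rpow_of_nonneg _ _ half_nonneg', ← mul_assoc, rpow_half_self_mul]
    calc (q * fun x => r x ^ (1/2:ℝ)) x = (q x * (q x * r x)) ^ (1/2:ℝ) := key
      _ ≤ (q x * pd x) ^ (1/2:ℝ) := by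
          refine ENNReal.rpow_le_rpow ?_ half_nonneg'
          rw [mul_comm (r x) (q x)] at h1
          exact mul_le_mul_right h1 _
      _ = (pd x * q x) ^ (1/2:ℝ) := by rw [mul_comm]
  rw [haff, hsplit, hsing0, zero_add]
  exact hac

lemma affE_withDensity (μ : Measure X) [SigmaFinite μ] {pd qd : X → ℝ≥0∞}
    (hpd : Measurable pd) (hqd : Measurable qd)
    {P Q : Measure X} (hP : P = μ.withDensity pd) (hQ : Q = μ.withDensity qd)
    [IsFiniteMeasure P] [IsFiniteMeasure Q] :
    affE P Q = ∫⁻ x, (pd x * qd x) ^ (1/2:ℝ) ∂μ := by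
  refine le_antisymm ?_ ?_
  · refine (affE_le μ hpd Q hP).trans (le_of_eq (lintegral_congr_ae ?_))
    have h : Q.rnDeriv μ =ᵐ[μ] qd := by rw [hQ]; exact Measure.rnDeriv_withDensity μ hqd
    filter_upwards [h] with x hx
    rw [hx]
  · set r := P.rnDeriv Q with hr
    have hrm : Measurable r := Measure.measurable_rnDeriv P Q
    set G : Set X := {x | qd x ≠ 0 ∧ qd x ≠ ∞} with hG
    have hGm : MeasurableSet G := by
      have h1 : MeasurableSet {x | qd x ≠ 0} := (hqd (measurableSet_singleton 0)).compl
      have h2 : MeasurableSet {x | qd x ≠ ∞} := (hqd (measurableSet_singleton ∞)).compl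
      exact h1.inter h2
    obtain ⟨T, hTm, hT1, hT2⟩ := P.mutuallySingular_singularPart Q
    -- μ (Tᶜ ∩ G) = 0
    have hQTc : ∫⁻ x in Tᶜ, qd x ∂μ = 0 := by
      rw [← withDensity_apply _ hTm.compl, ← hQ]; exact hT2
    have hqd0 : qd =ᵐ[μ.restrict Tᶜ] 0 := (lintegral_eq_zero_iff hqd).mp hQTc
    have hTcG : μ (Tᶜ ∩ G) = 0 := by
      have h1 : ∀ᵐ x ∂μ.restrict Tᶜ, x ∉ G := by
        filter_upwards [hqd0] with x hx
        rw [Pi.zero_apply] at hx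
        simp [hG, hx]
      have h2 := (ae_restrict_iff' hTm.compl).mp h1
      rw [ae_iff] at h2
      refine measure_mono_null ?_ h2
      intro x hx
      simp only [mem_setOf_eq, Classical.not_imp, not_not]
      exact ⟨hx.1, hx.2⟩
    -- key density identity on G
    have hkey : pd =ᵐ[μ.restrict G] (fun x => qd x * r x) := by
      have : SigmaFinite (μ.restrict G) := inferInstance
      refine ae_eq_of_forall_setLIntegral_eq_of_sigmaFinite hpd (hqd.mul hrm) ?_
      intro s hs _
      rw [Measure.restrict_restrict hs]
      set A := s ∩ G with hA
      have hAm : MeasurableSet A := hs.inter hGm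
      have hAG : A ⊆ G := inter_subset_right
      have h1 : ∫⁻ x in A, pd x ∂μ = P A := by rw [hP, withDensity_apply _ hAm]
      have hPdec : P A = P.singularPart Q A + (Q.withDensity r) A := by
        conv_lhs => rw [P.haveLebesgueDecomposition_add Q]
        rfl
      have hsing : P.singularPart Q A = 0 := by
        refine le_antisymm ?_ zero_le
        have hsub : A ⊆ (A ∩ T) ∪ (A ∩ Tᶜ) := by
          intro x hx
          by_cases hxT : x ∈ T
          · exact Or.inl ⟨hx, hxT⟩
          · exact Or.inr ⟨hx, hxT⟩
        refine (measure_mono hsub).trans ((measure_union_le _ _).trans ?_)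
        have e1 : P.singularPart Q (A ∩ T) = 0 :=
          le_antisymm ((measure_mono inter_subset_right).trans hT1.le) zero_le
        have e2 : P.singularPart Q (A ∩ Tᶜ) = 0 := by
          refine le_antisymm (((Measure.singularPart_le P Q) (A ∩ Tᶜ)).trans ?_) zero_le
          have hnull : μ (A ∩ Tᶜ) = 0 := by
            refine measure_mono_null ?_ hTcG
            intro x hx
            exact ⟨hx.2, hAG hx.1⟩
          rw [hP, withDensity_apply _ (hAm.inter hTm.compl), setLIntegral_measure_zero _ _ hnull]
        rw [e1, e2, add_zero]
      have h2 : (Q.withDensity r) A = ∫⁻ x in A, qd x * r x ∂μ := by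
        rw [withDensity_apply _ hAm, hQ,
          setLIntegral_withDensity_eq_setLIntegral_mul _ hqd hrm hAm]
        rfl
      rw [h1, hPdec, hsing, zero_add, h2]
    -- conclusion
    have hqlt : ∀ᵐ x ∂μ, qd x < ∞ := by
      refine ae_lt_top hqd ?_
      have hQu : ∫⁻ x, qd x ∂μ = Q univ := by
        rw [hQ, withDensity_apply _ MeasurableSet.univ, setLIntegral_univ]
      rw [hQu]
      exact measure_ne_top Q univ
    have hsplitG : ∫⁻ x, (pd x * qd x) ^ (1/2:ℝ) ∂μ
        = ∫⁻ x in G, (pd x * qd x) ^ (1/2:ℝ) ∂μ + ∫⁻ x in Gᶜ, (pd x * qd x) ^ (1/2:ℝ) ∂μ :=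
      (lintegral_add_compl _ hGm).symm
    have hGc0 : ∫⁻ x in Gᶜ, (pd x * qd x) ^ (1/2:ℝ) ∂μ = 0 := by
      have h0 : ∀ᵐ x ∂μ.restrict Gᶜ, (pd x * qd x) ^ (1/2:ℝ) = 0 := by
        filter_upwards [ae_restrict_of_ae hqlt, ae_restrict_mem hGm.compl] with x h1 h2
        have : qd x = 0 := by
          by_contra hne
          exact h2 ⟨hne, h1.ne⟩
        rw [this, mul_zero, ENNReal.zero_rpow_of_pos (by norm_num : (0:ℝ) < 1/2)]
      rw [lintegral_congr_ae h0, lintegral_zero]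
    have hGle : ∫⁻ x in G, (pd x * qd x) ^ (1/2:ℝ) ∂μ ≤ affE P Q := by
      have hcong : ∀ᵐ x ∂μ.restrict G, (pd x * qd x) ^ (1/2:ℝ) = qd x * r x ^ (1/2:ℝ) := by
        filter_upwards [hkey] with x hx
        rw [hx, mul_comm (qd x) (r x), mul_assoc, ENNReal.mul_rpow_of_nonneg _ _ half_nonneg',
          ENNReal.mul_rpow_of_nonneg _ _ half_nonneg', rpow_half_self_mul, mul_comm]
      rw [lintegral_congr_ae hcong]
      calc ∫⁻ x in G, qd x * r x ^ (1/2:ℝ) ∂μ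
          ≤ ∫⁻ x, qd x * r x ^ (1/2:ℝ) ∂μ := setLIntegral_le_lintegral _ _
        _ = ∫⁻ x, r x ^ (1/2:ℝ) ∂(μ.withDensity qd) :=
            (lintegral_withDensity_eq_lintegral_mul _ hqd (hrm.pow_const _)).symm
        _ = affE P Q := by rw [← hQ]; rfl
    rw [hsplitG, hGc0, add_zero]
    exact hGle

lemma sqrt_ofReal_eq {t : ℝ≥0∞} (ht : t ≠ ∞) :
    ENNReal.ofReal (Real.sqrt t.toReal) = t ^ (1/2:ℝ) := by
  rw [Real.sqrt_eq_rpow, ← ENNReal.ofReal_rpow_of_nonneg ENNReal.toReal_nonneg (by norm_num),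
    ENNReal.ofReal_toReal ht]

lemma fDiv_sqrt_eq (P Q : Measure X) [IsProbabilityMeasure P] [IsProbabilityMeasure Q] :
    fDiv (fun x => 1 - Real.sqrt x) 0 P Q = ((1 - (affE P Q).toReal : ℝ) : EReal) := by
  set r := P.rnDeriv Q with hr
  have hrm : Measurable r := Measure.measurable_rnDeriv P Q
  set g : X → ℝ := fun x => Real.sqrt ((r x).toReal) with hg
  have hgm : Measurable g := Real.continuous_sqrt.measurable.comp hrm.ennreal_toReal
  have hofReal : ∀ᵐ x ∂Q, ENNReal.ofReal (g x) = r x ^ (1/2:ℝ) := by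
    filter_upwards [Measure.rnDeriv_lt_top P Q] with x hx
    exact sqrt_ofReal_eq hx.ne
  have hlint : ∫⁻ x, ENNReal.ofReal (g x) ∂Q = affE P Q := lintegral_congr_ae hofReal
  have hne : affE P Q ≠ ∞ := ((affE_le_one P Q).trans_lt ENNReal.one_lt_top).ne
  have hgnn : 0 ≤ᵐ[Q] g := Eventually.of_forall fun x => Real.sqrt_nonneg _
  have hgint : Integrable g Q := by
    refine ⟨hgm.aestronglyMeasurable, ?_⟩
    rw [hasFiniteIntegral_iff_ofReal hgnn, hlint]
    exact hne.lt_top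
  have hgval : ∫ x, g x ∂Q = (affE P Q).toReal := by
    rw [integral_eq_lintegral_of_nonneg_ae hgnn hgm.aestronglyMeasurable, hlint]
  have hint : ∫ x, (1 - Real.sqrt ((r x).toReal)) ∂Q = 1 - (affE P Q).toReal := by
    rw [integral_sub (integrable_const 1) hgint, integral_const]
    simp [hgval]
  rw [fDiv, zero_mul, add_zero, hint]

lemma erealToENNReal_fDiv_sqrt (P Q : Measure X) [IsProbabilityMeasure P]
    [IsProbabilityMeasure Q] :
    erealToENNReal (fDiv (fun x => 1 - Real.sqrt x) 0 P Q) = 1 - affE P Q := by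
  have hne : affE P Q ≠ ∞ := ((affE_le_one P Q).trans_lt ENNReal.one_lt_top).ne
  rw [fDiv_sqrt_eq, erealToENNReal, if_neg (EReal.coe_ne_top _), EReal.toReal_coe,
    ENNReal.ofReal_sub _ ENNReal.toReal_nonneg, ENNReal.ofReal_one,
    ENNReal.ofReal_toReal hne]

end Helpers

section GeneralHelpers
variable {Θ X : Type*} [MeasurableSpace Θ] [MeasurableSpace X]

lemma integrable_of_integral_eq_one' {μ : Measure X} {f : X → ℝ} (h : ∫ x, f x ∂μ = 1) :
    Integrable f μ := by
  by_contra hc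
  rw [integral_undef hc] at h
  norm_num at h

lemma lintegral_ofReal_eq_one {μ : Measure X} {f : X → ℝ} (hf0 : ∀ x, 0 ≤ f x)
    (h : ∫ x, f x ∂μ = 1) : ∫⁻ x, ENNReal.ofReal (f x) ∂μ = 1 := by
  rw [← ofReal_integral_eq_lintegral_ofReal (integrable_of_integral_eq_one' h)
    (Eventually.of_forall hf0), h, ENNReal.ofReal_one]

/-- Bridge between the Bochner integral `∫ u²` and the `ℝ≥0∞` quantity. -/

lemma u_sq_integral (μ : Measure X) [SigmaFinite μ] (w : Measure Θ) [IsProbabilityMeasure w]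
    (p : Θ → X → ℝ) (hp0 : ∀ θ x, 0 ≤ p θ x) (hpm : Measurable (Function.uncurry p))
    (hpint : ∀ θ, ∫ x, p θ x ∂μ = 1) :
    ∫ x, (∫ θ, Real.sqrt (p θ x) ∂w) ^ 2 ∂μ
      = (∫⁻ x, (∫⁻ θ, (ENNReal.ofReal (p θ x)) ^ (1/2:ℝ) ∂w)
          * (∫⁻ θ, (ENNReal.ofReal (p θ x)) ^ (1/2:ℝ) ∂w) ∂μ).toReal := by
  set U : X → ℝ≥0∞ := fun x => ∫⁻ θ, (ENNReal.ofReal (p θ x)) ^ (1/2:ℝ) ∂w with hU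
  have hpdm : Measurable (fun q : Θ × X => ENNReal.ofReal (p q.1 q.2) ^ (1/2:ℝ)) :=
    (ENNReal.measurable_ofReal.comp hpm).pow_const _
  have hUm : Measurable U := hpdm.lintegral_prod_left'
  have hUU_le : ∀ x, U x * U x ≤ ∫⁻ θ, ENNReal.ofReal (p θ x) ∂w := by
    intro x
    have h1 : U x ≤ (∫⁻ θ, ENNReal.ofReal (p θ x) ∂w) ^ (1/2:ℝ) := by
      have h2 := lintegral_sqrt_mul_sqrt_le (μ := w)
        (f := fun θ => ENNReal.ofReal (p θ x)) (g := fun _ => 1)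
        ((ENNReal.measurable_ofReal.comp (hpm.comp measurable_prodMk_right)).aemeasurable)
        aemeasurable_const
      simp only [ENNReal.one_rpow, mul_one, lintegral_one, measure_univ] at h2
      exact h2
    calc U x * U x ≤ (∫⁻ θ, ENNReal.ofReal (p θ x) ∂w) ^ (1/2:ℝ)
          * (∫⁻ θ, ENNReal.ofReal (p θ x) ∂w) ^ (1/2:ℝ) := mul_le_mul' h1 h1
      _ = _ := rpow_half_self_mul _
  have hswap : ∫⁻ x, (∫⁻ θ, ENNReal.ofReal (p θ x) ∂w) ∂μ = 1 := by
    rw [lintegral_lintegral_swap]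
    · have : ∀ θ, ∫⁻ x, ENNReal.ofReal (p θ x) ∂μ = 1 := fun θ =>
        lintegral_ofReal_eq_one (hp0 θ) (hpint θ)
      simp_rw [this]
      simp
    · exact (ENNReal.measurable_ofReal.comp (hpm.comp measurable_swap)).aemeasurable
  have hc1 : ∫⁻ x, U x * U x ∂μ ≤ 1 := by
    rw [← hswap]; exact lintegral_mono hUU_le
  have hUUlt : ∀ᵐ x ∂μ, U x * U x < ∞ :=
    ae_lt_top (hUm.mul hUm) (hc1.trans_lt ENNReal.one_lt_top).ne
  have hae : ∀ᵐ x ∂μ, (∫ θ, Real.sqrt (p θ x) ∂w) ^ 2 = (U x * U x).toReal := by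
    filter_upwards [hUUlt] with x hx
    have hxlt : U x < ∞ := by
      by_contra h
      rw [not_lt, top_le_iff] at h
      rw [h] at hx
      simp at hx
    have hmθ : Measurable fun θ => Real.sqrt (p θ x) :=
      Real.continuous_sqrt.measurable.comp (hpm.comp measurable_prodMk_right)
    have hof : ∀ θ, ENNReal.ofReal (Real.sqrt (p θ x)) = ENNReal.ofReal (p θ x) ^ (1/2:ℝ) := by
      intro θ
      rw [Real.sqrt_eq_rpow, ← ENNReal.ofReal_rpow_of_nonneg (hp0 θ x) half_nonneg']
    have hUx : ∫⁻ θ, ENNReal.ofReal (Real.sqrt (p θ x)) ∂w = U x := by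
      simp_rw [hof]
      rfl
    have hnn : 0 ≤ᵐ[w] fun θ => Real.sqrt (p θ x) :=
      Eventually.of_forall fun θ => Real.sqrt_nonneg _
    have hval : ∫ θ, Real.sqrt (p θ x) ∂w = (U x).toReal := by
      rw [integral_eq_lintegral_of_nonneg_ae hnn hmθ.aestronglyMeasurable, hUx]
    rw [hval, sq, ENNReal.toReal_mul]
  rw [integral_congr_ae hae]
  exact integral_toReal (hUm.mul hUm).aemeasurable hUUlt

lemma fInformativity_sqrt_eq (μ : Measure X) [SigmaFinite μ] (w : Measure Θ)
    [IsProbabilityMeasure w] (p : Θ → X → ℝ) (hp0 : ∀ θ x, 0 ≤ p θ x)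
    (hpm : Measurable (Function.uncurry p)) (hpint : ∀ θ, ∫ x, p θ x ∂μ = 1)
    (P : Θ → Measure X)
    (hP : ∀ θ, P θ = μ.withDensity (fun x => ENNReal.ofReal (p θ x))) :
    fInformativity (fun x => 1 - Real.sqrt x) 0 P w
      = ((1 - Real.sqrt (∫ x, (∫ θ, Real.sqrt (p θ x) ∂w) ^ 2 ∂μ) : ℝ) : EReal) := by
  classical
  set pd : Θ → X → ℝ≥0∞ := fun θ x => ENNReal.ofReal (p θ x) with hpd
  have hpdm : ∀ θ, Measurable (pd θ) :=
    fun θ => ENNReal.measurable_ofReal.comp (hpm.comp measurable_prodMk_left)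
  have hpdjm : Measurable (fun q : Θ × X => pd q.1 q.2) := ENNReal.measurable_ofReal.comp hpm
  have hprob : ∀ θ, IsProbabilityMeasure (P θ) := fun θ =>
    ⟨by rw [hP θ, withDensity_apply _ MeasurableSet.univ, setLIntegral_univ,
      lintegral_ofReal_eq_one (hp0 θ) (hpint θ)]⟩
  set U : X → ℝ≥0∞ := fun x => ∫⁻ θ, (pd θ x) ^ (1/2:ℝ) ∂w with hU
  have hUm : Measurable U := (hpdjm.pow_const _).lintegral_prod_left'
  set c : ℝ≥0∞ := ∫⁻ x, U x * U x ∂μ with hc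
  -- c ≤ 1
  have hUU_le : ∀ x, U x * U x ≤ ∫⁻ θ, pd θ x ∂w := by
    intro x
    have h1 : U x ≤ (∫⁻ θ, pd θ x ∂w) ^ (1/2:ℝ) := by
      have h2 := lintegral_sqrt_mul_sqrt_le (μ := w)
        (f := fun θ => pd θ x) (g := fun _ => 1)
        ((hpdjm.comp measurable_prodMk_right).aemeasurable) aemeasurable_const
      simp only [ENNReal.one_rpow, mul_one, lintegral_one, measure_univ] at h2
      exact h2
    calc U x * U x ≤ (∫⁻ θ, pd θ x ∂w) ^ (1/2:ℝ) * (∫⁻ θ, pd θ x ∂w) ^ (1/2:ℝ) :=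
          mul_le_mul' h1 h1
      _ = _ := rpow_half_self_mul _
  have hc1 : c ≤ 1 := by
    have hswap : ∫⁻ x, (∫⁻ θ, pd θ x ∂w) ∂μ = 1 := by
      rw [lintegral_lintegral_swap]
      · have h3 : ∀ θ, ∫⁻ x, pd θ x ∂μ = 1 := fun θ =>
          lintegral_ofReal_eq_one (hp0 θ) (hpint θ)
        simp_rw [h3]
        simp
      · exact (hpdjm.comp measurable_swap).aemeasurable
    rw [hc, ← hswap]
    exact lintegral_mono hUU_le
  have hcne : c ≠ ∞ := (hc1.trans_lt ENNReal.one_lt_top).ne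
  set s : ℝ≥0∞ := c ^ (1/2:ℝ) with hs
  have hs1 : s ≤ 1 := by
    calc s ≤ (1:ℝ≥0∞) ^ (1/2:ℝ) := ENNReal.rpow_le_rpow hc1 half_nonneg'
      _ = 1 := ENNReal.one_rpow _
  have hsne : s ≠ ∞ := (hs1.trans_lt ENNReal.one_lt_top).ne
  -- the target in terms of s
  have htgt : ((1 - Real.sqrt (∫ x, (∫ θ, Real.sqrt (p θ x) ∂w) ^ 2 ∂μ) : ℝ) : EReal)
      = (((1 - s : ℝ≥0∞)) : EReal) := by
    have h1 : Real.sqrt (∫ x, (∫ θ, Real.sqrt (p θ x) ∂w) ^ 2 ∂μ) = s.toReal := by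
      rw [u_sq_integral μ w p hp0 hpm hpint, Real.sqrt_eq_rpow, ENNReal.toReal_rpow]
    have h2 : (1 - s).toReal = 1 - s.toReal := by
      rw [ENNReal.toReal_sub_of_le hs1 ENNReal.one_ne_top, ENNReal.toReal_one]
    have h3 : (((1 - s : ℝ≥0∞)) : EReal) = (((1 - s).toReal : ℝ) : EReal) := by
      rw [← EReal.toReal_coe_ennreal, EReal.coe_toReal]
      · simp [ENNReal.sub_ne_top ENNReal.one_ne_top]
      · exact (EReal.coe_ennreal_nonneg _).trans_lt' (by norm_num) |>.ne'
    rw [h1, h3, h2]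
  rw [htgt]
  unfold fInformativity
  -- rewrite the objective using affinities
  have hJ : ∀ (Q : Measure X), IsProbabilityMeasure Q →
      ∫⁻ θ, erealToENNReal (fDiv (fun x => 1 - Real.sqrt x) 0 (P θ) Q) ∂w
        = ∫⁻ θ, (1 - affE (P θ) Q) ∂w := by
    intro Q hQ
    haveI := hQ
    refine lintegral_congr fun θ => ?_
    haveI := hprob θ
    exact erealToENNReal_fDiv_sqrt (P θ) Q
  -- lower bound
  have hlow : ∀ (Q : Measure X), IsProbabilityMeasure Q →
      1 - s ≤ ∫⁻ θ, (1 - affE (P θ) Q) ∂w := by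
    intro Q hQ
    haveI := hQ
    set b : Θ → ℝ≥0∞ := fun θ => ∫⁻ x, (pd θ x * Q.rnDeriv μ x) ^ (1/2:ℝ) ∂μ with hb
    have hbjm : Measurable (fun q : Θ × X => (pd q.1 q.2 * Q.rnDeriv μ q.2) ^ (1/2:ℝ)) :=
      (hpdjm.mul ((Measure.measurable_rnDeriv Q μ).comp measurable_snd)).pow_const _
    have hbm : Measurable b := hbjm.lintegral_prod_right'
    have hab : ∀ θ, affE (P θ) Q ≤ b θ := by
      intro θ
      haveI := hprob θ
      exact affE_le μ (hpdm θ) Q (hP θ)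
    have hbint : ∫⁻ θ, b θ ∂w ≤ s := by
      have hsplit : ∀ θ, b θ
          = ∫⁻ x, (pd θ x) ^ (1/2:ℝ) * (Q.rnDeriv μ x) ^ (1/2:ℝ) ∂μ :=
        fun θ => lintegral_congr fun x => ENNReal.mul_rpow_of_nonneg _ _ half_nonneg'
      calc ∫⁻ θ, b θ ∂w
          = ∫⁻ x, U x * (Q.rnDeriv μ x) ^ (1/2:ℝ) ∂μ := by
            rw [lintegral_congr hsplit, lintegral_lintegral_swap]
            · refine lintegral_congr fun x => ?_
              have hmx : Measurable fun θ => (pd θ x) ^ (1/2:ℝ) :=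
                (hpdjm.comp measurable_prodMk_right).pow_const _
              exact lintegral_mul_const _ hmx
            · exact ((hpdjm.pow_const _).mul
                (((Measure.measurable_rnDeriv Q μ).comp measurable_snd).pow_const _)).aemeasurable
        _ = ∫⁻ x, (U x * U x) ^ (1/2:ℝ) * (Q.rnDeriv μ x) ^ (1/2:ℝ) ∂μ := by
            refine lintegral_congr fun x => ?_
            rw [ENNReal.mul_rpow_of_nonneg _ _ half_nonneg', rpow_half_self_mul]
        _ ≤ (∫⁻ x, U x * U x ∂μ) ^ (1/2:ℝ) * (∫⁻ x, Q.rnDeriv μ x ∂μ) ^ (1/2:ℝ) :=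
            lintegral_sqrt_mul_sqrt_le (hUm.mul hUm).aemeasurable
              (Measure.measurable_rnDeriv Q μ).aemeasurable
        _ ≤ s * 1 := by
            refine mul_le_mul' le_rfl ?_
            calc (∫⁻ x, Q.rnDeriv μ x ∂μ) ^ (1/2:ℝ)
                ≤ (1:ℝ≥0∞) ^ (1/2:ℝ) := by
                  refine ENNReal.rpow_le_rpow ?_ half_nonneg'
                  exact (Measure.lintegral_rnDeriv_le).trans (by simp)
              _ = 1 := ENNReal.one_rpow _
        _ = s := mul_one _
    calc 1 - s ≤ 1 - ∫⁻ θ, b θ ∂w := tsub_le_tsub_left hbint 1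
      _ ≤ ∫⁻ θ, (1 - b θ) ∂w := by
          rw [tsub_le_iff_right, ← lintegral_add_right _ hbm]
          calc (1:ℝ≥0∞) = ∫⁻ _, 1 ∂w := by simp
            _ ≤ _ := lintegral_mono fun θ => le_tsub_add
      _ ≤ ∫⁻ θ, (1 - affE (P θ) Q) ∂w :=
          lintegral_mono fun θ => tsub_le_tsub_left (hab θ) 1
  -- upper bound candidate
  obtain ⟨Q, hQprob, hJle⟩ : ∃ (Q : Measure X) (_ : IsProbabilityMeasure Q),
      ∫⁻ θ, (1 - affE (P θ) Q) ∂w ≤ 1 - s := by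
    by_cases hc0 : c = 0
    · have hs0 : s = 0 := by
        rw [hs, hc0, ENNReal.zero_rpow_of_pos (by norm_num : (0:ℝ) < 1/2)]
      have hΘ : Nonempty Θ := by
        by_contra h
        haveI := not_nonempty_iff.mp h
        have h1 : w univ = 1 := measure_univ
        rw [Set.univ_eq_empty_iff.mpr (by infer_instance), measure_empty] at h1
        norm_num at h1
      obtain ⟨θ0⟩ := hΘ
      refine ⟨P θ0, hprob θ0, ?_⟩
      rw [hs0, tsub_zero]
      calc ∫⁻ θ, (1 - affE (P θ) (P θ0)) ∂w ≤ ∫⁻ _, 1 ∂w := lintegral_mono fun θ => tsub_le_self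
        _ = 1 := by simp
    · set d : X → ℝ≥0∞ := fun x => U x * U x * c⁻¹ with hd
      have hdm : Measurable d := (hUm.mul hUm).mul_const _
      have hQd : (μ.withDensity d) univ = 1 := by
        rw [withDensity_apply _ MeasurableSet.univ, setLIntegral_univ, hd]
        rw [lintegral_mul_const (f := fun x => U x * U x) _ (hUm.mul hUm), ← hc, ENNReal.mul_inv_cancel hc0 hcne]
      haveI hQprob : IsProbabilityMeasure (μ.withDensity d) := ⟨hQd⟩
      refine ⟨μ.withDensity d, hQprob, ?_⟩
      have hsne0 : s ≠ 0 := by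
        rw [hs]
        simp only [ne_eq, ENNReal.rpow_eq_zero_iff, not_or]
        constructor
        · rintro ⟨h1, -⟩; exact hc0 h1
        · rintro ⟨h1, -⟩; exact hcne h1
      have haffQ : ∀ θ, affE (P θ) (μ.withDensity d) = ∫⁻ x, (pd θ x * d x) ^ (1/2:ℝ) ∂μ := by
        intro θ
        haveI := hprob θ
        exact affE_withDensity μ (hpdm θ) hdm (hP θ) rfl
      have hUU_half : ∀ t : ℝ≥0∞, (t * t) ^ (1/2:ℝ) = t := by
        intro t
        rw [ENNReal.mul_rpow_of_nonneg _ _ half_nonneg', rpow_half_self_mul]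
      have hdhalf : ∀ x, (d x) ^ (1/2:ℝ) = U x * s⁻¹ := by
        intro x
        rw [hd, ENNReal.mul_rpow_of_nonneg _ _ half_nonneg', hUU_half, ENNReal.inv_rpow]
      have hint_a : ∫⁻ θ, affE (P θ) (μ.withDensity d) ∂w = s := by
        calc ∫⁻ θ, affE (P θ) (μ.withDensity d) ∂w
            = ∫⁻ θ, ∫⁻ x, (pd θ x) ^ (1/2:ℝ) * (d x) ^ (1/2:ℝ) ∂μ ∂w := by
              refine lintegral_congr fun θ => ?_
              rw [haffQ θ]
              exact lintegral_congr fun x => ENNReal.mul_rpow_of_nonneg _ _ half_nonneg'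
          _ = ∫⁻ x, U x * (d x) ^ (1/2:ℝ) ∂μ := by
              rw [lintegral_lintegral_swap]
              · refine lintegral_congr fun x => ?_
                have hmx : Measurable fun θ => (pd θ x) ^ (1/2:ℝ) :=
                  (hpdjm.comp measurable_prodMk_right).pow_const _
                exact lintegral_mul_const _ hmx
              · exact ((hpdjm.pow_const _).mul
                  ((hdm.comp measurable_snd).pow_const _)).aemeasurable
          _ = ∫⁻ x, (U x * U x) * s⁻¹ ∂μ := by
              refine lintegral_congr fun x => ?_
              rw [hdhalf x, ← mul_assoc]
          _ = c * s⁻¹ := by rw [lintegral_mul_const (f := fun x => U x * U x) _ (hUm.mul hUm)]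
          _ = s := by
              have hcs : c = s * s := (rpow_half_self_mul c).symm
              rw [hcs, mul_assoc, ENNReal.mul_inv_cancel hsne0 hsne, mul_one]
      have ham : Measurable fun θ => affE (P θ) (μ.withDensity d) := by
        have he : (fun θ => affE (P θ) (μ.withDensity d))
            = fun θ => ∫⁻ x, (pd θ x * d x) ^ (1/2:ℝ) ∂μ := funext haffQ
        rw [he]
        exact ((hpdjm.mul (hdm.comp measurable_snd)).pow_const _).lintegral_prod_right'
      have hfin : ∫⁻ θ, affE (P θ) (μ.withDensity d) ∂w ≠ ∞ := by
        rw [hint_a]; exact hsne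
      have hle1 : (fun θ => affE (P θ) (μ.withDensity d)) ≤ᵐ[w] fun _ => 1 :=
        Eventually.of_forall fun θ => by haveI := hprob θ; exact affE_le_one _ _
      rw [lintegral_sub ham hfin hle1, hint_a, lintegral_one, measure_univ]
  refine le_antisymm ?_ ?_
  · refine iInf_le_of_le Q ?_
    refine iInf_le_of_le hQprob ?_
    rw [hJ Q hQprob]
    exact EReal.coe_ennreal_le_coe_ennreal_iff.mpr hJle
  · refine le_iInf fun Q' => le_iInf fun hQ' => ?_
    rw [hJ Q' hQ']
    exact EReal.coe_ennreal_le_coe_ennreal_iff.mpr (hlow Q' hQ')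


end GeneralHelpers

theorem part1_helper (X : Type) [MeasurableSpace X] (N : ℕ) (hN : 1 ≤ N)
    (P : Fin N → Measure X) (hPr : ∀ i, IsProbabilityMeasure (P i)) :
    fInformativity (fun x => 1 - Real.sqrt x) 0 P (((N : ℝ≥0∞))⁻¹ • Measure.count)
      = ((1 - Real.sqrt (1 - (1 / (2 * (N:ℝ)^2))
            * ∑ i, ∑ j, hellingerSq (P i) (P j)) : ℝ) : EReal) := by
  classical
  have hN0 : (N:ℝ) ≠ 0 := Nat.cast_ne_zero.mpr (by omega)
  have hNe0 : (N:ℝ≥0∞) ≠ 0 := Nat.cast_ne_zero.mpr (by omega)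
  have hNet : (N:ℝ≥0∞) ≠ ∞ := ENNReal.natCast_ne_top N
  set μ : Measure X := ∑ i, P i with hμ
  haveI hμfin : IsFiniteMeasure μ := by
    constructor
    rw [hμ, Measure.finset_sum_apply]
    refine (lt_of_le_of_lt (le_of_eq ?_) (ENNReal.natCast_lt_top N))
    have : ∀ i : Fin N, P i univ = 1 := fun i => (hPr i).measure_univ
    simp [this]
  have hle : ∀ i, P i ≤ μ := by
    intro i
    rw [hμ, Measure.le_iff]
    intro s hs
    rw [Measure.finset_sum_apply]
    exact Finset.single_le_sum (f := fun j => P j s) (fun j _ => zero_le) (Finset.mem_univ i)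
  have hac : ∀ i, P i ≪ μ := fun i => Measure.absolutelyContinuous_of_le (hle i)
  set w : Measure (Fin N) := ((N : ℝ≥0∞))⁻¹ • Measure.count with hw
  haveI hwprob : IsProbabilityMeasure w := by
    constructor
    rw [hw, Measure.smul_apply, show (Measure.count : Measure (Fin N)) univ = N by simp, smul_eq_mul]
    exact ENNReal.inv_mul_cancel hNe0 hNet
  set p : Fin N → X → ℝ := fun i x => ((P i).rnDeriv μ x).toReal with hp
  have hp0 : ∀ i x, 0 ≤ p i x := fun i x => ENNReal.toReal_nonneg
  have hpm : Measurable (Function.uncurry p) := by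
    have h1 : Measurable (fun q : X × Fin N => p q.2 q.1) :=
      measurable_from_prod_countable_left fun i =>
        (Measure.measurable_rnDeriv (P i) μ).ennreal_toReal
    exact h1.comp measurable_swap
  have hpint : ∀ i, ∫ x, p i x ∂μ = 1 := by
    intro i
    haveI := hPr i
    rw [hp]
    rw [Measure.integral_toReal_rnDeriv (hac i)]
    simp
  set pd : Fin N → X → ℝ≥0∞ := fun i x => ENNReal.ofReal (p i x) with hpdd
  have hpdm : ∀ i, Measurable (pd i) :=
    fun i => ENNReal.measurable_ofReal.comp ((Measure.measurable_rnDeriv (P i) μ).ennreal_toReal)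
  have hPd : ∀ i, P i = μ.withDensity (pd i) := by
    intro i
    haveI := hPr i
    have h1 : pd i =ᵐ[μ] (P i).rnDeriv μ := by
      filter_upwards [Measure.rnDeriv_lt_top (P i) μ] with x hx
      exact ENNReal.ofReal_toReal hx.ne
    rw [withDensity_congr_ae h1, Measure.withDensity_rnDeriv_eq _ _ (hac i)]
  rw [fInformativity_sqrt_eq μ w p hp0 hpm hpint P hPd]
  -- now identify the integrals
  congr 2
  rw [u_sq_integral μ w p hp0 hpm hpint]
  -- compute U and c
  have hUeq : ∀ x, (∫⁻ i, (pd i x) ^ (1/2:ℝ) ∂w) = (N:ℝ≥0∞)⁻¹ * ∑ i, (pd i x) ^ (1/2:ℝ) := by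
    intro x
    rw [hw, lintegral_smul_measure, lintegral_fintype]
    simp [Measure.count_singleton]
  set t : Fin N → Fin N → ℝ := fun i j => (affE (P i) (P j)).toReal with ht
  have htle : ∀ i j, affE (P i) (P j) ≤ 1 := by
    intro i j
    haveI := hPr i; haveI := hPr j
    exact affE_le_one _ _
  have htne : ∀ i j, affE (P i) (P j) ≠ ∞ :=
    fun i j => ((htle i j).trans_lt ENNReal.one_lt_top).ne
  have haff : ∀ i j, affE (P i) (P j) = ∫⁻ x, (pd i x * pd j x) ^ (1/2:ℝ) ∂μ := by
    intro i j
    haveI := hPr i; haveI := hPr j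
    exact affE_withDensity μ (hpdm i) (hpdm j) (hPd i) (hPd j)
  have hc : ∫⁻ x, (∫⁻ i, (pd i x) ^ (1/2:ℝ) ∂w) * (∫⁻ i, (pd i x) ^ (1/2:ℝ) ∂w) ∂μ
      = (N:ℝ≥0∞)⁻¹ * (N:ℝ≥0∞)⁻¹ * ∑ i, ∑ j, affE (P i) (P j) := by
    have hpoint : ∀ x, (∫⁻ i, (pd i x) ^ (1/2:ℝ) ∂w) * (∫⁻ i, (pd i x) ^ (1/2:ℝ) ∂w)
        = (N:ℝ≥0∞)⁻¹ * (N:ℝ≥0∞)⁻¹ * ∑ i, ∑ j, (pd i x * pd j x) ^ (1/2:ℝ) := by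
      intro x
      rw [hUeq x]
      rw [show ((N:ℝ≥0∞)⁻¹ * ∑ i, (pd i x) ^ (1/2:ℝ)) * ((N:ℝ≥0∞)⁻¹ * ∑ i, (pd i x) ^ (1/2:ℝ))
        = (N:ℝ≥0∞)⁻¹ * (N:ℝ≥0∞)⁻¹ * ((∑ i, (pd i x) ^ (1/2:ℝ)) * ∑ j, (pd j x) ^ (1/2:ℝ))
        by ring]
      congr 1
      rw [Finset.sum_mul_sum]
      refine Finset.sum_congr rfl fun i _ => Finset.sum_congr rfl fun j _ => ?_
      rw [ENNReal.mul_rpow_of_nonneg _ _ half_nonneg']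
    rw [lintegral_congr hpoint]
    rw [lintegral_const_mul _ (by
      refine Finset.measurable_sum _ fun i _ => Finset.measurable_sum _ fun j _ => ?_
      exact ((hpdm i).mul (hpdm j)).pow_const _)]
    congr 1
    rw [lintegral_finset_sum (f := fun i x => ∑ j, (pd i x * pd j x) ^ (1/2:ℝ)) _ (fun i _ => Finset.measurable_sum _ fun j _ =>
      ((hpdm i).mul (hpdm j)).pow_const _)]
    refine Finset.sum_congr rfl fun i _ => ?_
    rw [lintegral_finset_sum (f := fun j x => (pd i x * pd j x) ^ (1/2:ℝ)) _ (fun j _ => ((hpdm i).mul (hpdm j)).pow_const _)]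
    exact Finset.sum_congr rfl fun j _ => (haff i j).symm
  rw [hc]
  -- hellinger identities
  have hhell : ∀ i j, hellingerSq (P i) (P j) = 2 * (1 - t i j) := by
    intro i j
    haveI := hPr i; haveI := hPr j
    rw [hellingerSq, fDiv_sqrt_eq, EReal.toReal_coe, ht]
  -- convert toReal
  have hreal : ((N:ℝ≥0∞)⁻¹ * (N:ℝ≥0∞)⁻¹ * ∑ i, ∑ j, affE (P i) (P j)).toReal
      = (N:ℝ)⁻¹ * (N:ℝ)⁻¹ * ∑ i, ∑ j, t i j := by
    rw [ENNReal.toReal_mul, ENNReal.toReal_mul, ENNReal.toReal_inv, ENNReal.toReal_natCast]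
    congr 1
    rw [ENNReal.toReal_sum (fun i _ => by
      refine (fun h => ?_ : _ ≠ ∞)
      exact (ENNReal.sum_lt_top.mpr (fun j _ => (htne i j).lt_top)).ne h)]
    refine Finset.sum_congr rfl fun i _ => ?_
    exact ENNReal.toReal_sum fun j _ => htne i j
  rw [hreal]
  -- final algebra
  have hsum : ∑ i, ∑ j, hellingerSq (P i) (P j)
      = 2 * (N:ℝ)^2 - 2 * ∑ i, ∑ j, t i j := by
    have h1 : ∀ i : Fin N, ∑ j, hellingerSq (P i) (P j) = 2 * (N:ℝ) - 2 * ∑ j, t i j := by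
      intro i
      calc ∑ j, hellingerSq (P i) (P j) = ∑ j, (2 - 2 * t i j) := by
            refine Finset.sum_congr rfl fun j _ => ?_
            rw [hhell i j]; ring
        _ = 2 * (N:ℝ) - 2 * ∑ j, t i j := by
            rw [Finset.sum_sub_distrib, Finset.sum_const, Finset.card_univ, Fintype.card_fin,
              ← Finset.mul_sum]
            push_cast
            ring
    calc ∑ i, ∑ j, hellingerSq (P i) (P j) = ∑ i : Fin N, (2 * (N:ℝ) - 2 * ∑ j, t i j) :=
          Finset.sum_congr rfl fun i _ => h1 i
      _ = 2 * (N:ℝ)^2 - 2 * ∑ i, ∑ j, t i j := by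
          rw [Finset.sum_sub_distrib, Finset.sum_const, Finset.card_univ, Fintype.card_fin,
            ← Finset.mul_sum]
          push_cast
          ring
  rw [hsum]
  field_simp
  ring

/-- Closed form for the Hellinger informativity (for `f_{1/2}(x) = 1 - √x`,
with `f'(∞) = 0`): for the uniform prior on `N` points it equals
`1 - √(1 - (1/(2N²)) Σ_{i,j} H²(P_i‖P_j))`; more generally, for any prior `w` and
densities `p_θ` with respect to `μ`, it equals `1 - √(∫ u² dμ)` with
`u(x) = ∫ √(p_θ(x)) w(dθ)`. -/
theorem hellinger_informativity_closed_form :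
    (∀ (X : Type) [MeasurableSpace X] (N : ℕ), 1 ≤ N →
      ∀ (P : Fin N → Measure X), (∀ i, IsProbabilityMeasure (P i)) →
      fInformativity (fun x => 1 - Real.sqrt x) 0 P (((N : ℝ≥0∞))⁻¹ • Measure.count)
        = ((1 - Real.sqrt (1 - (1 / (2 * (N:ℝ)^2))
              * ∑ i, ∑ j, hellingerSq (P i) (P j)) : ℝ) : EReal))
    ∧
    (∀ (Θ X : Type) [MeasurableSpace Θ] [MeasurableSpace X] (μ : Measure X),
      SigmaFinite μ →
      ∀ (w : Measure Θ), IsProbabilityMeasure w →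
      ∀ (p : Θ → X → ℝ), (∀ θ x, 0 ≤ p θ x) →
      Measurable (Function.uncurry p) →
      (∀ θ, ∫ x, p θ x ∂μ = 1) →
      ∀ (P : Θ → Measure X),
      (∀ θ, P θ = μ.withDensity (fun x => ENNReal.ofReal (p θ x))) →
      fInformativity (fun x => 1 - Real.sqrt x) 0 P w
        = ((1 - Real.sqrt (∫ x, (∫ θ, Real.sqrt (p θ x) ∂w) ^ 2 ∂μ) : ℝ) : EReal)) := by
  constructor
  · intro X _ N hN P hPr
    exact part1_helper X N hN P hPr
  · intro Θ X _ _ μ hσ w hw p hp0 hpm hpint P hP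
    haveI := hσ
    haveI := hw
    exact fInformativity_sqrt_eq μ w p hp0 hpm hpint P hP
end
end
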